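/- The theory LC is decidable: the set of modal propositions A such that LC ⊢ A is a decidable set. -/

import Mathlib

namespace PLHA

/-! ## Modal propositional language -/

/-- Modal propositional formulas: atomic variables, ⊥, ∧, ∨, →, □. -/
inductive Form : Type
  | var : ℕ → Form
  | bot : Form
  | and : Form → Form → Form
  | or  : Form → Form → Form
  | imp : Form → Form → Form
  | box : Form → Form
  deriving DecidableEq

namespace Form

/-- ⊤ -/
def top : Form := imp bot bot

/-- A ↔ B -/
def iffF (A B : Form) : Form := and (imp A B) (imp B A)

/-- ⊡A := A ∧ □A -/
def boxdot (A : Form) : Form := and A (box A)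

/-- `A ∈ NOI`: every occurrence of → is in the scope of some □. -/
def noi : Form → Bool
  | var _ => true
  | bot => true
  | and A B => noi A && noi B
  | or A B => noi A && noi B
  | imp _ _ => false
  | box _ => true

/-- The Leivant translation `A^l`. -/
def lev : Form → Form
  | var n => var n
  | bot => bot
  | and A B => and (lev A) (lev B)
  | or A B => or (boxdot (lev A)) (boxdot (lev B))
  | imp A B => if noi A then imp A (lev B) else imp A B
  | box A => box A

/-- atomic propositions: atomic variables and ⊥. -/
def isAtom (A : Form) : Prop := (∃ n, A = var n) ∨ A = bot

/-- boxed propositions. -/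
def isBoxed (A : Form) : Prop := ∃ B, A = box B

/-- non-modal (□-free) propositions. -/
def boxFree : Form → Bool
  | var _ => true
  | bot => true
  | and A B => boxFree A && boxFree B
  | or A B => boxFree A && boxFree B
  | imp A B => boxFree A && boxFree B
  | box _ => false

/-- A bound on the indices of the variables occurring in a formula. -/
def fvb : Form → ℕ
  | var n => n + 1
  | bot => 0
  | and A B => max (fvb A) (fvb B)
  | or A B => max (fvb A) (fvb B)
  | imp A B => max (fvb A) (fvb B)
  | box A => fvb A

/-- maximal nesting depth of boxes. -/
def bdep : Form → ℕ
  | var _ => 0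
  | bot => 0
  | and A B => max (bdep A) (bdep B)
  | or A B => max (bdep A) (bdep B)
  | imp A B => max (bdep A) (bdep B)
  | box A => bdep A + 1

/-- the complexity measure ρ used to define NNIL. -/
def rho : Form → ℕ
  | var _ => 0
  | bot => 0
  | and A B => max (rho A) (rho B)
  | or A B => max (rho A) (rho B)
  | imp A B => max (rho A + 1) (rho B)
  | box _ => 0

end Form

/-- NNIL: no nested implications to the left. -/
def NNILc (A : Form) : Prop := Form.rho A ≤ 1

/-- TNNIL: thoroughly NNIL propositions. -/
inductive TNNIL : Form → Prop
  | var (n : ℕ) : TNNIL (.var n)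
  | bot : TNNIL .bot
  | and {A B} : TNNIL A → TNNIL B → TNNIL (.and A B)
  | or {A B} : TNNIL A → TNNIL B → TNNIL (.or A B)
  | box {A} : TNNIL A → TNNIL (.box A)
  | imp {A B} : A.noi = true → TNNIL A → TNNIL B → TNNIL (.imp A B)

/-- TNNIL⁻: propositions of the form B(□C₁,…,□Cₙ) with B non-modal and Cᵢ ∈ TNNIL. -/
inductive TNNILminus : Form → Prop
  | var (n : ℕ) : TNNILminus (.var n)
  | bot : TNNILminus .bot
  | box {A} : TNNIL A → TNNILminus (.box A)
  | and {A B} : TNNILminus A → TNNILminus B → TNNILminus (.and A B)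
  | or {A B} : TNNILminus A → TNNILminus B → TNNILminus (.or A B)
  | imp {A B} : TNNILminus A → TNNILminus B → TNNILminus (.imp A B)

/-! ## Proof systems -/

/-- Hilbert-style axioms of intuitionistic propositional logic (over the modal language). -/
inductive IpcAx : Form → Prop
  | a1 (A B) : IpcAx (.imp A (.imp B A))
  | a2 (A B C) : IpcAx (.imp (.imp A (.imp B C)) (.imp (.imp A B) (.imp A C)))
  | a3 (A B) : IpcAx (.imp A (.imp B (.and A B)))
  | a4 (A B) : IpcAx (.imp (.and A B) A)
  | a5 (A B) : IpcAx (.imp (.and A B) B)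
  | a6 (A B) : IpcAx (.imp A (.or A B))
  | a7 (A B) : IpcAx (.imp B (.or A B))
  | a8 (A B C) : IpcAx (.imp (.imp A C) (.imp (.imp B C) (.imp (.or A B) C)))
  | a9 (A) : IpcAx (.imp .bot A)

/-- Derivability from IPC axioms together with extra axioms `Ax`, modus ponens,
and (if `useNec = true`) the necessitation rule. -/
inductive Proves (Ax : Form → Prop) (useNec : Bool) : Form → Prop
  | ax {A} : Ax A → Proves Ax useNec A
  | ipc {A} : IpcAx A → Proves Ax useNec A
  | mp {A B} : Proves Ax useNec (.imp A B) → Proves Ax useNec A → Proves Ax useNec B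
  | nec {A} : useNec = true → Proves Ax useNec A → Proves Ax useNec (.box A)

/-- K and 4 axiom schemas. -/
inductive K4Ax : Form → Prop
  | k (A B) : K4Ax (.imp (.box (.imp A B)) (.imp (.box A) (.box B)))
  | four (A) : K4Ax (.imp (.box A) (.box (.box A)))

/-- K, 4, and Löb's axiom schemas. -/
inductive GLAx : Form → Prop
  | k (A B) : GLAx (.imp (.box (.imp A B)) (.imp (.box A) (.box B)))
  | four (A) : GLAx (.imp (.box A) (.box (.box A)))
  | lob (A) : GLAx (.imp (.box (.imp (.box A) A)) (.box A))

/-- IPC_□ : intuitionistic propositional logic over the modal language. -/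
def IPCbProves : Form → Prop := Proves (fun _ => False) false

/-- iK4. -/
def iK4Proves : Form → Prop := Proves K4Ax true

/-- iGL. -/
def iGLProves : Form → Prop := Proves GLAx true

/-- the completeness principle CP : A → □A. -/
def CPAx : Form → Prop := fun F => ∃ A : Form, F = .imp A (.box A)

/-- LC := iGL + CP. -/
def LCProves : Form → Prop := Proves (fun F => GLAx F ∨ CPAx F) true

/-- CP restricted to atomic propositions. -/
def CPaAx : Form → Prop := fun F => ∃ A : Form, A.isAtom ∧ F = .imp A (.box A)

/-- the extended Leivant principle Le⁺ : □A → □A^l. -/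
def LeplusAx : Form → Prop := fun F => ∃ A : Form, F = .imp (.box A) (.box A.lev)

/-- LLe⁺ := iGL + Le⁺ + CP_a. -/
def LLeplusProves : Form → Prop := Proves (fun F => GLAx F ∨ LeplusAx F ∨ CPaAx F) true

/-! ## The preservativity relation ▶ -/

/-- the bracket operation [A]B. -/
def bracket (A : Form) : Form → Form
  | .and B C => .and (bracket A B) (bracket A C)
  | .or B C => .or (bracket A B) (bracket A C)
  | .imp B C => .imp A (.imp B C)
  | B => B

def listConj : List Form → Form
  | [] => Form.top
  | [A] => A
  | A :: l => .and A (listConj l)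

def listDisj : List Form → Form
  | [] => Form.bot
  | [A] => A
  | A :: l => .or A (listDisj l)

/-- the relation ▶ : the smallest relation satisfying A1–A4 and B1–B3.
In B2 a (finite) set of implications is represented by a list `X` of pairs `(E, F)`
standing for the implications `E → F`. -/
inductive Pres : Form → Form → Prop
  | a1 {A B} : iK4Proves (.imp A B) → Pres A B
  | a2 {A B C} : Pres A B → Pres B C → Pres A C
  | a3 {A B C} : Pres C A → Pres C B → Pres C (.and A B)
  | a4 {A B} : Pres A B → Pres (.box A) (.box B)
  | b1 {A B C} : Pres A C → Pres B C → Pres (.or A B) C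
  | b2 (X : List (Form × Form)) (C : Form) :
      Pres (.imp (listConj (X.map fun p => Form.imp p.1 p.2)) C)
        (listDisj ((X.map Prod.fst ++ [C]).map
          (bracket (listConj (X.map fun p => Form.imp p.1 p.2)))))
  | b3 {A B C} : Pres A B → (C.isAtom ∨ C.isBoxed) → Pres (.imp C A) (.imp C B)

/-- the axioms of H_σ : LLe⁺ + CP_a + {□A→□B : A ▶ B}. -/
def HsigmaAx : Form → Prop := fun F =>
  GLAx F ∨ LeplusAx F ∨ CPaAx F ∨ ∃ A B : Form, Pres A B ∧ F = .imp (.box A) (.box B)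

/-- H_σ. -/
def HsigmaProves : Form → Prop := Proves HsigmaAx true

/-! ## NNIL/TNNIL approximations -/

/-- `star` is (a realization of) Visser's NNIL-algorithm: `star A` is the best NNIL
approximation of `A` from below. -/
def IsNNILApproxOp (star : Form → Form) : Prop :=
  ∀ A : Form, NNILc (star A) ∧ IPCbProves (.imp (star A) A) ∧
    ∀ B : Form, NNILc B → IPCbProves (.imp B A) → IPCbProves (.imp B (star A))

/-- replace the outermost boxed subformulas of a formula by the fresh variables
`k, k+1, …` (left to right), returning the resulting non-modal skeleton together
with the list of bodies of removed boxes. -/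
def strip : Form → ℕ → Form × List Form
  | .var n, _ => (.var n, [])
  | .bot, _ => (.bot, [])
  | .and A B, k =>
      let pa := strip A k
      let pb := strip B (k + pa.2.length)
      (.and pa.1 pb.1, pa.2 ++ pb.2)
  | .or A B, k =>
      let pa := strip A k
      let pb := strip B (k + pa.2.length)
      (.or pa.1 pb.1, pa.2 ++ pb.2)
  | .imp A B, k =>
      let pa := strip A k
      let pb := strip B (k + pa.2.length)
      (.imp pa.1 pb.1, pa.2 ++ pb.2)
  | .box A, k => (.var k, [A])

/-- simultaneous substitution of formulas for variables. -/
def substF (f : ℕ → Form) : Form → Form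
  | .var n => f n
  | .bot => .bot
  | .and A B => .and (substF f A) (substF f B)
  | .or A B => .or (substF f A) (substF f B)
  | .imp A B => .imp (substF f A) (substF f B)
  | .box A => .box (substF f A)

/-- fuelled version of the TNNIL approximation `A⁺`:
`A⁺ := (A')^*[pᵢ | □Bᵢ⁺]` where `A = A'[pᵢ | □Bᵢ]` with `A'` non-modal. -/
def plusAux (star : Form → Form) : ℕ → Form → Form
  | 0, A => A
  | fuel + 1, A =>
      let k := A.fvb
      let p := strip A k
      substF (fun n =>
        if k ≤ n ∧ n < k + p.2.length then
          .box (plusAux star fuel (p.2.getD (n - k) .bot))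
        else .var n) (star p.1)

/-- the TNNIL approximation `A⁺` (relative to a realization `star` of the NNIL-algorithm). -/
def plusF (star : Form → Form) (A : Form) : Form := plusAux star (A.bdep + 1) A

/-- `A⁻`: writing `A = B(□C₁,…,□Cₙ)` with `B` non-modal, `A⁻ := B(□C₁⁺,…,□Cₙ⁺)`. -/
def minusF (star : Form → Form) (A : Form) : Form :=
  let k := A.fvb
  let p := strip A k
  substF (fun n =>
    if k ≤ n ∧ n < k + p.2.length then
      .box (plusF star (p.2.getD (n - k) .bot))
    else .var n) p.1

/-- the box translation A^□. -/
def boxTr : Form → Form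
  | .var n => Form.boxdot (.var n)
  | .bot => Form.boxdot .bot
  | .and A B => .and (boxTr A) (boxTr B)
  | .or A B => .or (boxTr A) (boxTr B)
  | .imp A B => Form.boxdot (.imp (boxTr A) (boxTr B))
  | .box A => .box (boxTr A)

/-- a Gödel numbering of modal formulas. -/
def encodeForm : Form → ℕ
  | .var n => Nat.pair 0 n
  | .bot => Nat.pair 1 0
  | .and A B => Nat.pair 2 (Nat.pair (encodeForm A) (encodeForm B))
  | .or A B => Nat.pair 3 (Nat.pair (encodeForm A) (encodeForm B))
  | .imp A B => Nat.pair 4 (Nat.pair (encodeForm A) (encodeForm B))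
  | .box A => Nat.pair 5 (encodeForm A)

/-! ## Propositional Kripke models -/

/-- Kripke models for intuitionistic modal logic. -/
structure PKripke where
  W : Type
  le : W → W → Prop
  r : W → W → Prop
  V : W → ℕ → Prop
  le_refl : ∀ w, le w w
  le_trans : ∀ {a b c}, le a b → le b c → le a c
  le_antisymm : ∀ {a b}, le a b → le b a → a = b
  le_r : ∀ {a b c}, le a b → r b c → r a c
  mono : ∀ {a b : W} {n : ℕ}, le a b → V a n → V b n

/-- the forcing relation of a propositional modal Kripke model. -/
def pforces (M : PKripke) : Form → M.W → Prop
  | .var n, w => M.V w n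
  | .bot, _ => False
  | .and A B, w => pforces M A w ∧ pforces M B w
  | .or A B, w => pforces M A w ∨ pforces M B w
  | .imp A B, w => ∀ v, M.le w v → pforces M A v → pforces M B v
  | .box A, w => ∀ v, M.r w v → pforces M A v

namespace PKripke

/-- brilliant: (R;≤) ⊆ R. -/
def Brilliant (M : PKripke) : Prop := ∀ {a b c : M.W}, M.r a b → M.le b c → M.r a c

/-- reverse well-founded: well-founded with respect to R⁻¹. -/
def RevWF (M : PKripke) : Prop := WellFounded (fun a b : M.W => M.r b a)

/-- perfect: brilliant, reverse well-founded, and R ⊆ <. -/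
def Perfect (M : PKripke) : Prop :=
  M.Brilliant ∧ M.RevWF ∧ ∀ {a b : M.W}, M.r a b → M.le a b ∧ a ≠ b

/-- the partial order (W,≤) is a tree: it has a root and the set of predecessors
of every node is linearly ordered. -/
def TreeFrame (M : PKripke) : Prop :=
  (∃ root : M.W, ∀ w, M.le root w) ∧
  ∀ w u v : M.W, M.le u w → M.le v w → (M.le u v ∨ M.le v u)

end PKripke

/-! ## First-order arithmetic -/

/-- terms of the language (S, +, ·, <, 0) (de Bruijn variables). -/
inductive ATerm : Type
  | var : ℕ → ATerm
  | zero : ATerm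
  | succ : ATerm → ATerm
  | add : ATerm → ATerm → ATerm
  | mul : ATerm → ATerm → ATerm
  deriving DecidableEq

namespace ATerm

def lift : ATerm → ℕ → ATerm
  | var n, d => if n < d then var n else var (n + 1)
  | zero, _ => zero
  | succ t, d => succ (t.lift d)
  | add t u, d => add (t.lift d) (u.lift d)
  | mul t u, d => mul (t.lift d) (u.lift d)

def subst : ATerm → ℕ → ATerm → ATerm
  | var n, k, s => if n < k then var n else if n = k then s else var (n - 1)
  | zero, _, _ => zero
  | succ t, k, s => succ (t.subst k s)
  | add t u, k, s => add (t.subst k s) (u.subst k s)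
  | mul t u, k, s => mul (t.subst k s) (u.subst k s)

/-- non-binding substitution: replace `var k` by `s`, leaving other variables alone. -/
def substId : ATerm → ℕ → ATerm → ATerm
  | var n, k, s => if n = k then s else var n
  | zero, _, _ => zero
  | succ t, k, s => succ (t.substId k s)
  | add t u, k, s => add (t.substId k s) (u.substId k s)
  | mul t u, k, s => mul (t.substId k s) (u.substId k s)

/-- all variables have index < k. -/
def vlt : ATerm → ℕ → Prop
  | var n, k => n < k
  | zero, _ => True
  | succ t, k => t.vlt k
  | add t u, k => t.vlt k ∧ u.vlt k
  | mul t u, k => t.vlt k ∧ u.vlt k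

/-- evaluation in the standard model ℕ. -/
def evalN : ATerm → (ℕ → ℕ) → ℕ
  | var n, ρ => ρ n
  | zero, _ => 0
  | succ t, ρ => t.evalN ρ + 1
  | add t u, ρ => t.evalN ρ + u.evalN ρ
  | mul t u, ρ => t.evalN ρ * u.evalN ρ

def fvB : ATerm → ℕ
  | var n => n + 1
  | zero => 0
  | succ t => t.fvB
  | add t u => max t.fvB u.fvB
  | mul t u => max t.fvB u.fvB

/-- a Gödel numbering of terms. -/
def code : ATerm → ℕ
  | var n => Nat.pair 0 n
  | zero => Nat.pair 1 0
  | succ t => Nat.pair 2 t.code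
  | add t u => Nat.pair 3 (Nat.pair t.code u.code)
  | mul t u => Nat.pair 4 (Nat.pair t.code u.code)

end ATerm

/-- the numeral of a natural number. -/
def numeral : ℕ → ATerm
  | 0 => .zero
  | n + 1 => .succ (numeral n)

/-- extend an environment by one value at index 0. -/
def econs {α : Sort*} (b : α) (ρ : ℕ → α) : ℕ → α
  | 0 => b
  | n + 1 => ρ n

/-- first-order formulas of arithmetic (de Bruijn variables). -/
inductive AForm : Type
  | eq : ATerm → ATerm → AForm
  | lt : ATerm → ATerm → AForm
  | fal : AForm
  | and : AForm → AForm → AForm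
  | or : AForm → AForm → AForm
  | imp : AForm → AForm → AForm
  | all : AForm → AForm
  | ex : AForm → AForm
  deriving DecidableEq

namespace AForm

def neg (A : AForm) : AForm := imp A fal

def iffA (A B : AForm) : AForm := and (imp A B) (imp B A)

def lift : AForm → ℕ → AForm
  | eq t u, d => eq (t.lift d) (u.lift d)
  | lt t u, d => lt (t.lift d) (u.lift d)
  | fal, _ => fal
  | and A B, d => and (A.lift d) (B.lift d)
  | or A B, d => or (A.lift d) (B.lift d)
  | imp A B, d => imp (A.lift d) (B.lift d)
  | all A, d => all (A.lift (d + 1))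
  | ex A, d => ex (A.lift (d + 1))

/-- capture-avoiding substitution of a term for variable `k` (instantiating a binder). -/
def subst : AForm → ℕ → ATerm → AForm
  | eq t u, k, s => eq (t.subst k s) (u.subst k s)
  | lt t u, k, s => lt (t.subst k s) (u.subst k s)
  | fal, _, _ => fal
  | and A B, k, s => and (A.subst k s) (B.subst k s)
  | or A B, k, s => or (A.subst k s) (B.subst k s)
  | imp A B, k, s => imp (A.subst k s) (B.subst k s)
  | all A, k, s => all (A.subst (k + 1) (s.lift 0))
  | ex A, k, s => ex (A.subst (k + 1) (s.lift 0))

/-- non-binding substitution: replace the free variable `k` by `s`. -/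
def substId : AForm → ℕ → ATerm → AForm
  | eq t u, k, s => eq (t.substId k s) (u.substId k s)
  | lt t u, k, s => lt (t.substId k s) (u.substId k s)
  | fal, _, _ => fal
  | and A B, k, s => and (A.substId k s) (B.substId k s)
  | or A B, k, s => or (A.substId k s) (B.substId k s)
  | imp A B, k, s => imp (A.substId k s) (B.substId k s)
  | all A, k, s => all (A.substId (k + 1) (s.lift 0))
  | ex A, k, s => ex (A.substId (k + 1) (s.lift 0))

/-- all free variables have index < k. -/
def vlt : AForm → ℕ → Prop
  | eq t u, k => t.vlt k ∧ u.vlt k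
  | lt t u, k => t.vlt k ∧ u.vlt k
  | fal, _ => True
  | and A B, k => A.vlt k ∧ B.vlt k
  | or A B, k => A.vlt k ∧ B.vlt k
  | imp A B, k => A.vlt k ∧ B.vlt k
  | all A, k => A.vlt (k + 1)
  | ex A, k => A.vlt (k + 1)

/-- a bound on the free variables of a formula. -/
def fvB : AForm → ℕ
  | eq t u => max t.fvB u.fvB
  | lt t u => max t.fvB u.fvB
  | fal => 0
  | and A B => max A.fvB B.fvB
  | or A B => max A.fvB B.fvB
  | imp A B => max A.fvB B.fvB
  | all A => A.fvB - 1
  | ex A => A.fvB - 1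

/-- classical (Tarskian) satisfaction in the standard model ℕ. -/
def SatN : AForm → (ℕ → ℕ) → Prop
  | eq t u, ρ => t.evalN ρ = u.evalN ρ
  | lt t u, ρ => t.evalN ρ < u.evalN ρ
  | fal, _ => False
  | and A B, ρ => A.SatN ρ ∧ B.SatN ρ
  | or A B, ρ => A.SatN ρ ∨ B.SatN ρ
  | imp A B, ρ => A.SatN ρ → B.SatN ρ
  | all A, ρ => ∀ n : ℕ, A.SatN (econs n ρ)
  | ex A, ρ => ∃ n : ℕ, A.SatN (econs n ρ)

/-- a Gödel numbering of arithmetic formulas. -/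
def code : AForm → ℕ
  | eq t u => Nat.pair 0 (Nat.pair t.code u.code)
  | lt t u => Nat.pair 1 (Nat.pair t.code u.code)
  | fal => Nat.pair 2 0
  | and A B => Nat.pair 3 (Nat.pair A.code B.code)
  | or A B => Nat.pair 4 (Nat.pair A.code B.code)
  | imp A B => Nat.pair 5 (Nat.pair A.code B.code)
  | all A => Nat.pair 6 A.code
  | ex A => Nat.pair 7 A.code

end AForm

/-- Δ₀ formulas: only bounded quantifiers. -/
inductive Delta0 : AForm → Prop
  | eq (t u) : Delta0 (.eq t u)
  | lt (t u) : Delta0 (.lt t u)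
  | fal : Delta0 .fal
  | and {A B} : Delta0 A → Delta0 B → Delta0 (.and A B)
  | or {A B} : Delta0 A → Delta0 B → Delta0 (.or A B)
  | imp {A B} : Delta0 A → Delta0 B → Delta0 (.imp A B)
  | ball (t : ATerm) {A} : Delta0 A → Delta0 (.all (.imp (.lt (.var 0) (t.lift 0)) A))
  | bex (t : ATerm) {A} : Delta0 A → Delta0 (.ex (.and (.lt (.var 0) (t.lift 0)) A))

/-- Σ₁ formulas: existential quantifiers over a Δ₀ matrix. -/
inductive Sigma1 : AForm → Prop
  | of_delta0 {A} : Delta0 A → Sigma1 A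
  | ex {A} : Sigma1 A → Sigma1 (.ex A)

/-- a Hilbert-style proof system for intuitionistic first-order logic with equality,
from a set `T` of (closed) non-logical axioms. -/
inductive Prf (T : AForm → Prop) : AForm → Prop
  | hyp {A} : T A → Prf T A
  | mp {A B} : Prf T (.imp A B) → Prf T A → Prf T B
  | gen {A} : Prf T A → Prf T (.all A)
  | k (A B) : Prf T (.imp A (.imp B A))
  | s (A B C) : Prf T (.imp (.imp A (.imp B C)) (.imp (.imp A B) (.imp A C)))
  | pair (A B) : Prf T (.imp A (.imp B (.and A B)))
  | fst (A B) : Prf T (.imp (.and A B) A)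
  | snd (A B) : Prf T (.imp (.and A B) B)
  | inl (A B) : Prf T (.imp A (.or A B))
  | inr (A B) : Prf T (.imp B (.or A B))
  | cases (A B C) : Prf T (.imp (.imp A C) (.imp (.imp B C) (.imp (.or A B) C)))
  | exfalso (A) : Prf T (.imp .fal A)
  | allE (A : AForm) (t : ATerm) : Prf T (.imp (.all A) (A.subst 0 t))
  | allShift (A B : AForm) : Prf T (.imp (.all (.imp (B.lift 0) A)) (.imp B (.all A)))
  | exI (A : AForm) (t : ATerm) : Prf T (.imp (A.subst 0 t) (.ex A))
  | exE (A B : AForm) : Prf T (.imp (.all (.imp A (B.lift 0))) (.imp (.ex A) B))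
  | eqRefl : Prf T (.all (.eq (.var 0) (.var 0)))
  | leibniz (A : AForm) : Prf T (.all (.all (.imp (.eq (.var 1) (.var 0))
      (.imp (((A.lift 1).lift 1).substId 0 (.var 1))
            (((A.lift 1).lift 1).substId 0 (.var 0))))))

/-- iterated universal quantification. -/
def ucAux : ℕ → AForm → AForm
  | 0, A => A
  | k + 1, A => ucAux k (.all A)

/-- universal closure. -/
def uc (A : AForm) : AForm := ucAux A.fvB A

/-- the induction axiom for the formula A (induction on variable 0). -/
def indAx (A : AForm) : AForm :=
  uc (.imp (.and (A.subst 0 .zero) (.all (.imp A (A.substId 0 (.succ (.var 0))))))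
      (.all A))

/-- the axioms Q1–Q8. -/
inductive QAx : AForm → Prop
  | q1 : QAx (.all (.imp (.eq (.succ (.var 0)) .zero) .fal))
  | q2 : QAx (.all (.all (.imp (.eq (.succ (.var 1)) (.succ (.var 0))) (.eq (.var 1) (.var 0)))))
  | q3 : QAx (.all (.or (.eq (.var 0) .zero) (.ex (.eq (.succ (.var 0)) (.var 1)))))
  | q4 : QAx (.all (.eq (.add (.var 0) .zero) (.var 0)))
  | q5 : QAx (.all (.all (.eq (.add (.var 1) (.succ (.var 0))) (.succ (.add (.var 1) (.var 0))))))
  | q6 : QAx (.all (.eq (.mul (.var 0) .zero) .zero))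
  | q7 : QAx (.all (.all (.eq (.mul (.var 1) (.succ (.var 0))) (.add (.mul (.var 1) (.var 0)) (.var 1)))))
  | q8 : QAx (.all (.all (AForm.iffA (.lt (.var 1) (.var 0))
      (.ex (.eq (.add (.var 2) (.succ (.var 0))) (.var 1))))))

/-- the axioms of Heyting Arithmetic: Q1–Q8 and full induction. -/
def HAAx : AForm → Prop := fun A => QAx A ∨ ∃ B : AForm, A = indAx B

/-- provability in HA. -/
def HAProves : AForm → Prop := Prf HAAx

/-- interface for the standard arithmetized provability predicate `Prov_HA` of HA:
`Pr A` is the Σ₁ sentence `Prov_HA(⌜A⌝)`. -/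
structure ProvPred where
  Pr : AForm → AForm
  sentence : ∀ A, (Pr A).vlt 0
  sigma1 : ∀ A, Sigma1 (Pr A)
  correct : ∀ A : AForm, ((Pr A).SatN (fun _ => 0) ↔ HAProves A)
  dNec : ∀ A, HAProves A → HAProves (Pr A)
  dK : ∀ A B, HAProves (.imp (Pr (.imp A B)) (.imp (Pr A) (Pr B)))
  dSigma : ∀ A, Sigma1 A → A.vlt 0 → HAProves (.imp A (Pr A))
  dLob : ∀ A, HAProves (.imp (Pr (.imp (Pr A) A)) (Pr A))

/-- the arithmetical interpretation `σ_HA` of modal formulas determined by a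
substitution `σ` and a provability predicate `Pr`. -/
def interp (Pr : AForm → AForm) (σ : ℕ → AForm) : Form → AForm
  | .var n => σ n
  | .bot => .fal
  | .and A B => .and (interp Pr σ A) (interp Pr σ B)
  | .or A B => .or (interp Pr σ A) (interp Pr σ B)
  | .imp A B => .imp (interp Pr σ A) (interp Pr σ B)
  | .box A => Pr (interp Pr σ A)

/-- σ is an arithmetical substitution: it maps atomic variables to sentences. -/
def ArithSubst (σ : ℕ → AForm) : Prop := ∀ n, (σ n).vlt 0

/-- σ is a Σ₁-substitution: it maps atomic variables to Σ₁ sentences. -/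
def Sigma1Subst (σ : ℕ → AForm) : Prop := ∀ n, Sigma1 (σ n) ∧ (σ n).vlt 0

/-! ## The theories HAₓ and indexed provability (for the refined Leivant principle) -/

/-- induction formulas of the special shape (A→B)→B with A, B ∈ Σ₁. -/
def shapeInd (A : AForm) : Prop := ∃ S Tf : AForm, Sigma1 S ∧ Sigma1 Tf ∧ A = .imp (.imp S Tf) Tf

/-- the axioms of HAₓ: Q1-Q8, and induction restricted to formulas of the shape
(A→B)→B with A,B ∈ Σ₁ or with Gödel number ≤ x. -/
def HAxAx (x : ℕ) : AForm → Prop := fun A =>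
  QAx A ∨ ∃ B : AForm, (shapeInd B ∨ B.code ≤ x) ∧ A = indAx B

/-- interface for the arithmetized bounded provability predicates `□ₓ`:
`PrB A` is the Σ₁ formula with free variable 0 expressing `Prov_{HA_{v₀}}(⌜A⌝)`, and
`PrBSub A` (for `A` with one free variable) is the Σ₁ formula with free variables 0, 1
expressing `Prov_{HA_{v₀}}(⌜A(v̇₁)⌝)`. -/
structure BddProvPred where
  PrB : AForm → AForm
  PrBSub : AForm → AForm
  PrB_vlt : ∀ A, (PrB A).vlt 1
  PrB_sigma1 : ∀ A, Sigma1 (PrB A)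
  PrB_correct : ∀ (A : AForm) (n : ℕ),
    ((PrB A).SatN (fun i => if i = 0 then n else 0) ↔ Prf (HAxAx n) A)
  PrBSub_vlt : ∀ A, (PrBSub A).vlt 2
  PrBSub_sigma1 : ∀ A, Sigma1 (PrBSub A)
  PrBSub_correct : ∀ (A : AForm) (n m : ℕ),
    ((PrBSub A).SatN (fun i => if i = 0 then n else m) ↔ Prf (HAxAx n) (A.subst 0 (numeral m)))

/-! ## First-order Kripke models of HA -/

/-- a first-order Kripke model for the language of arithmetic over the frame `(W, le)`:
each node carries a classical structure, and the structure at a smaller node is a weak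
substructure of the structure at a bigger one (realized as subsets of a common universe,
closed under the operations). -/
structure FOKripke (W : Type) (le : W → W → Prop) where
  U : Type
  dom : W → Set U
  zero : U
  succ : U → U
  add : U → U → U
  mul : U → U → U
  ltR : U → U → Prop
  dom_mono : ∀ {a b : W}, le a b → dom a ⊆ dom b
  zero_mem : ∀ a, zero ∈ dom a
  succ_mem : ∀ a x, x ∈ dom a → succ x ∈ dom a
  add_mem : ∀ a x y, x ∈ dom a → y ∈ dom a → add x y ∈ dom a
  mul_mem : ∀ a x y, x ∈ dom a → y ∈ dom a → mul x y ∈ dom a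

/-- evaluation of a term in a first-order Kripke model. -/
def tevalK {W : Type} {le : W → W → Prop} (M : FOKripke W le) (ρ : ℕ → M.U) : ATerm → M.U
  | .var n => ρ n
  | .zero => M.zero
  | .succ t => M.succ (tevalK M ρ t)
  | .add t u => M.add (tevalK M ρ t) (tevalK M ρ u)
  | .mul t u => M.mul (tevalK M ρ t) (tevalK M ρ u)

/-- the forcing relation of a first-order Kripke model. -/
def FOForces {W : Type} {le : W → W → Prop} (M : FOKripke W le) :
    AForm → W → (ℕ → M.U) → Prop
  | .eq t u, _, ρ => tevalK M ρ t = tevalK M ρ u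
  | .lt t u, _, ρ => M.ltR (tevalK M ρ t) (tevalK M ρ u)
  | .fal, _, _ => False
  | .and A B, w, ρ => FOForces M A w ρ ∧ FOForces M B w ρ
  | .or A B, w, ρ => FOForces M A w ρ ∨ FOForces M B w ρ
  | .imp A B, w, ρ => ∀ v, le w v → FOForces M A v ρ → FOForces M B v ρ
  | .all A, w, ρ => ∀ v, le w v → ∀ b ∈ M.dom v, FOForces M A v (econs b ρ)
  | .ex A, w, ρ => ∃ b ∈ M.dom w, FOForces M A w (econs b ρ)

/-- the Kripke model forces all axioms of HA. -/
def ForcesHA {W : Type} {le : W → W → Prop} (M : FOKripke W le) : Prop :=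
  ∀ A : AForm, HAAx A → ∀ w : W, FOForces M A w (fun _ => M.zero)

end PLHA

namespace PLHA

namespace LCDec
open Form

abbrev L (A : Form) : Prop := LCProves A

lemma ax_k (A B : Form) : L (.imp (.box (.imp A B)) (.imp (.box A) (.box B))) :=
  .ax (Or.inl (.k A B))
lemma ax_four (A : Form) : L (.imp (.box A) (.box (.box A))) := .ax (Or.inl (.four A))
lemma ax_lob (A : Form) : L (.imp (.box (.imp (.box A) A)) (.box A)) := .ax (Or.inl (.lob A))
lemma ax_cp (A : Form) : L (.imp A (.box A)) := .ax (Or.inr ⟨A, rfl⟩)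

lemma c_mp {G A B : Form} (h1 : L (.imp G (.imp A B))) (h2 : L (.imp G A)) : L (.imp G B) :=
  ((Proves.ipc (IpcAx.a2 G A B)).mp h1).mp h2
lemma c_of {G B : Form} (h : L B) : L (.imp G B) := (Proves.ipc (IpcAx.a1 B G)).mp h
lemma l_id (A : Form) : L (.imp A A) :=
  c_mp (Proves.ipc (IpcAx.a1 A (.imp A A))) (Proves.ipc (IpcAx.a1 A A))
lemma l_cut {A B C : Form} (h1 : L (.imp A B)) (h2 : L (.imp B C)) : L (.imp A C) :=
  c_mp (c_of h2) h1
lemma l_top : L .top := l_id .bot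
lemma c2_mp {G1 G2 A B : Form} (h1 : L (.imp G1 (.imp G2 (.imp A B))))
    (h2 : L (.imp G1 (.imp G2 A))) : L (.imp G1 (.imp G2 B)) :=
  c_mp (c_mp (c_of (Proves.ipc (IpcAx.a2 G2 A B))) h1) h2
lemma c2_of {G1 G2 B : Form} (h : L B) : L (.imp G1 (.imp G2 B)) := c_of (c_of h)
lemma andI_c {G A B : Form} (h1 : L (.imp G A)) (h2 : L (.imp G B)) : L (.imp G (.and A B)) :=
  c_mp (c_mp (c_of (Proves.ipc (IpcAx.a3 A B))) h1) h2
lemma and1_c {G A B : Form} (h : L (.imp G (.and A B))) : L (.imp G A) :=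
  c_mp (c_of (Proves.ipc (IpcAx.a4 A B))) h
lemma and2_c {G A B : Form} (h : L (.imp G (.and A B))) : L (.imp G B) :=
  c_mp (c_of (Proves.ipc (IpcAx.a5 A B))) h
lemma orE_c {G A B C : Form} (hor : L (.imp G (.or A B))) (h1 : L (.imp G (.imp A C)))
    (h2 : L (.imp G (.imp B C))) : L (.imp G C) :=
  c_mp (c_mp (c_mp (c_of (Proves.ipc (IpcAx.a8 A B C))) h1) h2) hor
lemma botE_c {G A : Form} (h : L (.imp G .bot)) : L (.imp G A) :=
  c_mp (c_of (Proves.ipc (IpcAx.a9 A))) h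
lemma curry {A B C : Form} (h : L (.imp (.and A B) C)) : L (.imp A (.imp B C)) :=
  c2_mp (c2_of h) (Proves.ipc (IpcAx.a3 A B))
lemma boxK {A B : Form} (h : L (.box (.imp A B))) : L (.imp (.box A) (.box B)) :=
  (ax_k A B).mp h
lemma l_nec {A : Form} (h : L A) : L (.box A) := .nec rfl h
lemma box_pair (A B : Form) : L (.imp (.box A) (.imp (.box B) (.box (.and A B)))) :=
  l_cut (boxK (l_nec (Proves.ipc (IpcAx.a3 A B)))) (ax_k B (.and A B))

/-! ### Finite conjunctions -/

def cjL : List Form → Form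
  | [] => .top
  | A :: l => .and A (cjL l)

lemma cjL_mem {B : Form} : ∀ {l : List Form}, B ∈ l → L (.imp (cjL l) B)
  | A :: l, h => by
      rcases List.mem_cons.1 h with rfl | h
      · exact Proves.ipc (IpcAx.a4 _ _)
      · exact l_cut (Proves.ipc (IpcAx.a5 _ _)) (cjL_mem h)

lemma cjL_intro {D : Form} : ∀ {l : List Form}, (∀ B ∈ l, L (.imp D B)) → L (.imp D (cjL l))
  | [], _ => c_of l_top
  | A :: l, h => andI_c (h A List.mem_cons_self)
      (cjL_intro fun B hB => h B (List.mem_cons_of_mem _ hB))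

lemma cjL_box {D : Form} : ∀ {l : List Form}, (∀ B ∈ l, L (.imp D (.box B))) →
    L (.imp D (.box (cjL l)))
  | [], _ => c_of (l_nec l_top)
  | A :: l, h => c_mp (c_mp (c_of (box_pair A (cjL l))) (h A List.mem_cons_self))
      (cjL_box fun B hB => h B (List.mem_cons_of_mem _ hB))

noncomputable def cj (Γ : Finset Form) : Form := cjL Γ.toList

def Th (Γ : Finset Form) (B : Form) : Prop := L (.imp (cj Γ) B)

lemma th_mem {Γ : Finset Form} {B : Form} (h : B ∈ Γ) : Th Γ B :=
  cjL_mem (Finset.mem_toList.2 h)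
lemma cj_intro {D : Form} {Γ : Finset Form} (h : ∀ B ∈ Γ, L (.imp D B)) : L (.imp D (cj Γ)) :=
  cjL_intro fun B hB => h B (Finset.mem_toList.1 hB)
lemma cj_box {D : Form} {Γ : Finset Form} (h : ∀ B ∈ Γ, L (.imp D (.box B))) :
    L (.imp D (.box (cj Γ))) :=
  cjL_box fun B hB => h B (Finset.mem_toList.1 hB)
lemma th_mono {Γ Γ' : Finset Form} {B : Form} (hs : Γ ⊆ Γ') (h : Th Γ B) : Th Γ' B :=
  l_cut (cj_intro fun C hC => th_mem (hs hC)) h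
lemma th_mp {Γ : Finset Form} {A B : Form} (h1 : Th Γ (.imp A B)) (h2 : Th Γ A) : Th Γ B :=
  c_mp h1 h2
lemma th_of {Γ : Finset Form} {B : Form} (h : L B) : Th Γ B := c_of h
lemma th_insert_of {Γ : Finset Form} {D B : Form} (h : Th Γ (.imp D B)) :
    Th (insert D Γ) B :=
  c_mp (l_cut (cj_intro fun C hC => th_mem (Finset.mem_insert_of_mem hC)) h)
    (th_mem (Finset.mem_insert_self _ _))
lemma th_insert {Γ : Finset Form} {D B : Form} (h : Th (insert D Γ) B) : Th Γ (.imp D B) := by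
  have step : L (.imp (.and (cj Γ) D) (cj (insert D Γ))) := cj_intro fun C hC => by
    rcases Finset.mem_insert.1 hC with rfl | hC
    · exact Proves.ipc (IpcAx.a5 _ _)
    · exact l_cut (Proves.ipc (IpcAx.a4 _ _)) (th_mem hC)
  exact curry (l_cut step h)

/-! ### boxes of a context -/

def Bx (Γ : Finset Form) : Finset Form :=
  Γ.biUnion fun B => match B with | .box C => {C} | _ => ∅

lemma mem_Bx {Γ : Finset Form} {C : Form} : C ∈ Bx Γ ↔ .box C ∈ Γ := by
  constructor
  · intro h
    rcases Finset.mem_biUnion.1 h with ⟨B, hB, hC⟩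
    cases B <;> simp only [Finset.notMem_empty, Finset.mem_singleton] at hC
    subst hC; exact hB
  · intro h
    exact Finset.mem_biUnion.2 ⟨.box C, h, Finset.mem_singleton_self _⟩

/-- the key Löb + CP lemma: if `Γ, {C : □C ∈ Γ}, □B ⊢ B` then `Γ ⊢ □B`. -/
lemma th_box {Γ : Finset Form} {B : Form}
    (h : Th (insert (.box B) (Γ ∪ Bx Γ)) B) : Th Γ (.box B) := by
  set G : Form := .and (cj Γ) (cj (Bx Γ)) with hG
  have hGins : L (.imp (.and G (.box B)) (cj (insert (.box B) (Γ ∪ Bx Γ)))) :=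
    cj_intro fun C hC => by
      rcases Finset.mem_insert.1 hC with rfl | hC
      · exact Proves.ipc (IpcAx.a5 _ _)
      · rcases Finset.mem_union.1 hC with hC | hC
        · exact l_cut (Proves.ipc (IpcAx.a4 _ _))
            (l_cut (Proves.ipc (IpcAx.a4 _ _)) (th_mem hC))
        · exact l_cut (Proves.ipc (IpcAx.a4 _ _))
            (l_cut (Proves.ipc (IpcAx.a5 _ _)) (th_mem hC))
  have h1 : L (.imp G (.imp (.box B) B)) := curry (l_cut hGins h)
  have h2 : L (.imp (.box G) (.box B)) := l_cut (boxK (l_nec h1)) (ax_lob B)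
  have h3 : Th Γ (.box G) :=
    c_mp (c_mp (c_of (box_pair (cj Γ) (cj (Bx Γ)))) (ax_cp (cj Γ)))
      (cj_box fun C hC => th_mem (mem_Bx.1 hC))
  exact c_mp (c_of h2) h3

end LCDec

namespace LCDec
open Form

/-! ### Generic forcing and soundness -/

structure Cond {W : Type} (le r : W → W → Prop) (V : W → ℕ → Prop) : Prop where
  refl : ∀ w, le w w
  trans : ∀ {a b c}, le a b → le b c → le a c
  le_r : ∀ {a b c}, le a b → r b c → r a c
  mono : ∀ {a b : W} {n}, le a b → V a n → V b n
  rtrans : ∀ {a b c}, r a b → r b c → r a c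
  rsub : ∀ {a b}, r a b → le a b
  rwf : WellFounded (fun a b => r b a)

def frc {W : Type} (le r : W → W → Prop) (V : W → ℕ → Prop) : Form → W → Prop
  | .var n, w => V w n
  | .bot, _ => False
  | .and A B, w => frc le r V A w ∧ frc le r V B w
  | .or A B, w => frc le r V A w ∨ frc le r V B w
  | .imp A B, w => ∀ v, le w v → frc le r V A v → frc le r V B v
  | .box A, w => ∀ v, r w v → frc le r V A v

variable {W : Type} {le r : W → W → Prop} {V : W → ℕ → Prop}

lemma frc_mono (hc : Cond le r V) : ∀ {A : Form} {w v : W}, le w v →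
    frc le r V A w → frc le r V A v
  | .var n, w, v, h, hf => hc.mono h hf
  | .bot, _, _, _, hf => hf.elim
  | .and A B, w, v, h, hf => ⟨frc_mono hc h hf.1, frc_mono hc h hf.2⟩
  | .or A B, w, v, h, hf =>
      hf.elim (fun h1 => Or.inl (frc_mono hc h h1)) fun h1 => Or.inr (frc_mono hc h h1)
  | .imp A B, w, v, h, hf => fun u hu ha => hf u (hc.trans h hu) ha
  | .box A, w, v, h, hf => fun u hu => hf u (hc.le_r h hu)

theorem sound {A : Form} (h : LCProves A) (hc : Cond le r V) : ∀ w, frc le r V A w := by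
  induction h with
  | @ax A h =>
    rcases h with h | ⟨B, rfl⟩
    · cases h with
      | k A B =>
        intro w v _ h1 u hvu h2 t hut
        exact h1 t (hc.le_r hvu hut) t (hc.refl t) (h2 t hut)
      | four A =>
        intro w v _ h1 u hvu t hut
        exact h1 t (hc.rtrans hvu hut)
      | lob A =>
        intro w v _ h1 u hru
        refine hc.rwf.induction (C := fun u => r v u → frc le r V A u) u ?_ hru
        intro x IH hvx
        have hbx : frc le r V (.box A) x := fun t hxt => IH t hxt (hc.rtrans hvx hxt)
        exact h1 x hvx x (hc.refl x) hbx
    · intro w v _ ha u hrvu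
      exact frc_mono hc (hc.rsub hrvu) ha
  | @ipc A h =>
    cases h with
    | a1 A B => intro w v _ ha u hvu _; exact frc_mono hc hvu ha
    | a2 A B C =>
      intro w v _ h1 u hvu h2 t hut ha
      exact h1 t (hc.trans hvu hut) ha t (hc.refl t) (h2 t hut ha)
    | a3 A B => intro w v _ ha u hvu hb; exact ⟨frc_mono hc hvu ha, hb⟩
    | a4 A B => intro w v _ ha; exact ha.1
    | a5 A B => intro w v _ ha; exact ha.2
    | a6 A B => intro w v _ ha; exact Or.inl ha
    | a7 A B => intro w v _ ha; exact Or.inr ha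
    | a8 A B C =>
      intro w v _ h1 u hvu h2 t hut hab
      rcases hab with ha | hb
      · exact h1 t (hc.trans hvu hut) ha
      · exact h2 t hut hb
    | a9 A => intro w v _ ha; exact ha.elim
  | mp h1 h2 ih1 ih2 => exact fun w => ih1 w w (hc.refl w) (ih2 w)
  | nec _ _ ih => exact fun w v _ => ih v

/-! ### Subformulas -/

def subF : Form → Finset Form
  | .var n => {.var n}
  | .bot => {.bot}
  | .and A B => insert (.and A B) (subF A ∪ subF B)
  | .or A B => insert (.or A B) (subF A ∪ subF B)
  | .imp A B => insert (.imp A B) (subF A ∪ subF B)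
  | .box A => insert (.box A) (subF A)

lemma self_mem_subF : ∀ A : Form, A ∈ subF A
  | .var n => Finset.mem_singleton_self _
  | .bot => Finset.mem_singleton_self _
  | .and A B => Finset.mem_insert_self _ _
  | .or A B => Finset.mem_insert_self _ _
  | .imp A B => Finset.mem_insert_self _ _
  | .box A => Finset.mem_insert_self _ _

lemma subF_closed : ∀ {A B : Form}, B ∈ subF A → subF B ⊆ subF A := by
  intro A
  induction A with
  | var n =>
    intro B hB
    have := Finset.mem_singleton.1 hB; subst this; exact Finset.Subset.refl _
  | bot =>
    intro B hB
    have := Finset.mem_singleton.1 hB; subst this; exact Finset.Subset.refl _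
  | and A B ihA ihB =>
    intro C hC
    rcases Finset.mem_insert.1 hC with rfl | hC
    · exact Finset.Subset.refl _
    · rcases Finset.mem_union.1 hC with hC | hC
      · exact fun x hx => Finset.mem_insert_of_mem (Finset.mem_union_left _ (ihA hC hx))
      · exact fun x hx => Finset.mem_insert_of_mem (Finset.mem_union_right _ (ihB hC hx))
  | or A B ihA ihB =>
    intro C hC
    rcases Finset.mem_insert.1 hC with rfl | hC
    · exact Finset.Subset.refl _
    · rcases Finset.mem_union.1 hC with hC | hC
      · exact fun x hx => Finset.mem_insert_of_mem (Finset.mem_union_left _ (ihA hC hx))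
      · exact fun x hx => Finset.mem_insert_of_mem (Finset.mem_union_right _ (ihB hC hx))
  | imp A B ihA ihB =>
    intro C hC
    rcases Finset.mem_insert.1 hC with rfl | hC
    · exact Finset.Subset.refl _
    · rcases Finset.mem_union.1 hC with hC | hC
      · exact fun x hx => Finset.mem_insert_of_mem (Finset.mem_union_left _ (ihA hC hx))
      · exact fun x hx => Finset.mem_insert_of_mem (Finset.mem_union_right _ (ihB hC hx))
  | box A ihA =>
    intro C hC
    rcases Finset.mem_insert.1 hC with rfl | hC
    · exact Finset.Subset.refl _
    · exact fun x hx => Finset.mem_insert_of_mem (ihA hC hx)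

/-- S is closed under subformulas. -/
def SCl (S : Finset Form) : Prop := ∀ B ∈ S, subF B ⊆ S

lemma scl_subF (A : Form) : SCl (subF A) := fun _ hB => subF_closed hB

/-! ### The canonical model -/

structure Good (S Γ : Finset Form) : Prop where
  sub : Γ ⊆ S
  con : ¬ Th Γ .bot
  cl : ∀ B ∈ S, Th Γ B → B ∈ Γ
  prime : ∀ B C : Form, .or B C ∈ Γ → B ∈ Γ ∨ C ∈ Γ

lemma extend {S Δ : Finset Form} {B : Form} (hS : SCl S) (hΔ : Δ ⊆ S) (h : ¬ Th Δ B) :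
    ∃ Γ, Good S Γ ∧ Δ ⊆ Γ ∧ ¬ Th Γ B := by
  classical
  let cand : Finset (Finset Form) := S.powerset.filter (fun Γ => Δ ⊆ Γ ∧ ¬ Th Γ B)
  have hmemc : ∀ Γ, Γ ∈ cand ↔ Γ ⊆ S ∧ Δ ⊆ Γ ∧ ¬ Th Γ B := by
    intro Γ; simp [cand, Finset.mem_filter, Finset.mem_powerset]
  have hne : cand.Nonempty := ⟨Δ, (hmemc Δ).2 ⟨hΔ, le_refl _, h⟩⟩
  obtain ⟨Γ, hΓ, hmax⟩ := cand.exists_maximal hne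
  obtain ⟨hΓS, hΔΓ, hΓB⟩ := (hmemc Γ).1 hΓ
  have key : ∀ D ∈ S, D ∉ Γ → Th (insert D Γ) B := by
    intro D hDS hDΓ
    by_contra hth
    have hmem : insert D Γ ∈ cand :=
      (hmemc _).2 ⟨Finset.insert_subset hDS hΓS, hΔΓ.trans (Finset.subset_insert _ _), hth⟩
    exact hDΓ (hmax hmem (Finset.subset_insert _ _) (Finset.mem_insert_self _ _))
  refine ⟨Γ, ⟨hΓS, ?_, ?_, ?_⟩, hΔΓ, hΓB⟩
  · exact fun hbot => hΓB (botE_c hbot)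
  · intro D hDS hth
    by_contra hDΓ
    exact hΓB (th_mp (th_insert (key D hDS hDΓ)) hth)
  · intro D E hor
    by_contra hne'
    push_neg at hne'
    have hDS : D ∈ S := hS _ (hΓS hor) (by simp [subF, self_mem_subF])
    have hES : E ∈ S := hS _ (hΓS hor) (by simp [subF, self_mem_subF])
    exact hΓB (orE_c (th_mem hor) (th_insert (key D hDS hne'.1))
      (th_insert (key E hES hne'.2)))

def Wld (S : Finset Form) : Type := {Γ : Finset Form // Good S Γ}

noncomputable instance (S : Finset Form) : Fintype (Wld S) :=
  Fintype.ofInjective (fun Γ : Wld S => (⟨Γ.1, Finset.mem_powerset.2 Γ.2.sub⟩ :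
    {x // x ∈ S.powerset})) (by intro a b h; apply Subtype.ext; simpa using congrArg Subtype.val h)

def Kle {S : Finset Form} (Γ Δ : Wld S) : Prop := Γ.1 ⊆ Δ.1
def Kr {S : Finset Form} (Γ Δ : Wld S) : Prop :=
  Γ.1 ⊆ Δ.1 ∧ (∀ C : Form, .box C ∈ Γ.1 → C ∈ Δ.1) ∧ ∃ C : Form, .box C ∈ Δ.1 ∧ .box C ∉ Γ.1
def KV {S : Finset Form} (Γ : Wld S) (n : ℕ) : Prop := .var n ∈ Γ.1

lemma Kr_card {S : Finset Form} {Γ Δ : Wld S} (h : Kr Γ Δ) : Γ.1.card < Δ.1.card := by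
  obtain ⟨hsub, _, C, hC, hC'⟩ := h
  exact Finset.card_lt_card ⟨hsub, fun hcon => hC' (hcon hC)⟩

lemma cond_canon (S : Finset Form) : Cond (Kle (S := S)) Kr KV := by
  refine ⟨fun w => Finset.Subset.refl _, fun h1 h2 x hx => h2 (h1 hx), ?_, ?_, ?_, ?_, ?_⟩
  · rintro a b c hab ⟨h1, h2, C, hC, hC'⟩
    exact ⟨hab.trans h1, fun D hD => h2 D (hab hD), C, hC, fun hcon => hC' (hab hcon)⟩
  · intro a b n hab hV; exact hab hV
  · rintro a b c ⟨h1, h2, _⟩ ⟨h1', h2', C, hC, hC'⟩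
    exact ⟨h1.trans h1', fun D hD => h2' D (h1 hD), C, hC, fun hcon => hC' (h1 hcon)⟩
  · exact fun h => h.1
  · have key : ∀ {a b : Wld S}, Kr b a → (S.card - a.1.card) < (S.card - b.1.card) := by
      intro a b h
      have h1 := Kr_card h
      have h2 : a.1.card ≤ S.card := Finset.card_le_card a.2.sub
      omega
    exact Subrelation.wf (fun h => key h) (InvImage.wf _ Nat.lt_wfRel.wf)


/-! ### Truth lemma -/

theorem truth {S : Finset Form} (hS : SCl S) :
    ∀ {B : Form}, B ∈ S → ∀ Γ : Wld S, (B ∈ Γ.1 ↔ frc Kle Kr KV B Γ) := by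
  intro B
  induction B with
  | var n => intro _ Γ; exact Iff.rfl
  | bot => exact fun _ Γ => ⟨fun h => (Γ.2.con (th_mem h)).elim, fun h => h.elim⟩
  | and A B ihA ihB =>
    intro hmem Γ
    have hA : A ∈ S := hS _ hmem (by simp [subF, self_mem_subF])
    have hB : B ∈ S := hS _ hmem (by simp [subF, self_mem_subF])
    constructor
    · intro h
      exact ⟨(ihA hA Γ).1 (Γ.2.cl A hA (and1_c (th_mem h))),
        (ihB hB Γ).1 (Γ.2.cl B hB (and2_c (th_mem h)))⟩
    · rintro ⟨h1, h2⟩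
      exact Γ.2.cl _ hmem (andI_c (th_mem ((ihA hA Γ).2 h1)) (th_mem ((ihB hB Γ).2 h2)))
  | or A B ihA ihB =>
    intro hmem Γ
    have hA : A ∈ S := hS _ hmem (by simp [subF, self_mem_subF])
    have hB : B ∈ S := hS _ hmem (by simp [subF, self_mem_subF])
    constructor
    · intro h
      rcases Γ.2.prime A B h with h1 | h1
      · exact Or.inl ((ihA hA Γ).1 h1)
      · exact Or.inr ((ihB hB Γ).1 h1)
    · rintro (h1 | h1)
      · exact Γ.2.cl _ hmem (th_mp (th_of (Proves.ipc (IpcAx.a6 A B)))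
          (th_mem ((ihA hA Γ).2 h1)))
      · exact Γ.2.cl _ hmem (th_mp (th_of (Proves.ipc (IpcAx.a7 A B)))
          (th_mem ((ihB hB Γ).2 h1)))
  | imp A B ihA ihB =>
    intro hmem Γ
    have hA : A ∈ S := hS _ hmem (by simp [subF, self_mem_subF])
    have hB : B ∈ S := hS _ hmem (by simp [subF, self_mem_subF])
    constructor
    · intro h Δ hle hfA
      have hAΔ : A ∈ Δ.1 := (ihA hA Δ).2 hfA
      exact (ihB hB Δ).1 (Δ.2.cl B hB (th_mp (th_mem (hle h)) (th_mem hAΔ)))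
    · intro hfrc
      by_contra hnotmem
      have hnth : ¬ Th (insert A Γ.1) B := fun hth =>
        hnotmem (Γ.2.cl _ hmem (th_insert hth))
      obtain ⟨Δ, hGood, hsub, hΔB⟩ := extend hS (Finset.insert_subset hA Γ.2.sub) hnth
      have hBΔ : B ∉ Δ := fun hB' => hΔB (th_mem hB')
      have hle : Kle Γ ⟨Δ, hGood⟩ := fun x hx => hsub (Finset.mem_insert_of_mem hx)
      exact hBΔ ((ihB hB ⟨Δ, hGood⟩).2 (hfrc ⟨Δ, hGood⟩ hle
        ((ihA hA ⟨Δ, hGood⟩).1 (hsub (Finset.mem_insert_self _ _)))))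
  | box A ihA =>
    intro hmem Γ
    have hA : A ∈ S := hS _ hmem (by simp [subF, self_mem_subF])
    constructor
    · intro h Δ hr
      exact (ihA hA Δ).1 (hr.2.1 A h)
    · intro hfrc
      by_contra hnotmem
      have hnth : ¬ Th (insert (.box A) (Γ.1 ∪ Bx Γ.1)) A := fun hth =>
        hnotmem (Γ.2.cl _ hmem (th_box hth))
      have hsubS : insert (.box A) (Γ.1 ∪ Bx Γ.1) ⊆ S := by
        refine Finset.insert_subset hmem (Finset.union_subset Γ.2.sub ?_)
        intro C hC
        exact hS _ (Γ.2.sub (mem_Bx.1 hC)) (by simp [subF, self_mem_subF])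
      obtain ⟨Δ, hGood, hsub, hΔA⟩ := extend hS hsubS hnth
      have hAΔ : A ∉ Δ := fun h' => hΔA (th_mem h')
      have hr : Kr Γ ⟨Δ, hGood⟩ := by
        refine ⟨fun x hx => hsub (Finset.mem_insert_of_mem (Finset.mem_union_left _ hx)),
          ?_, A, hsub (Finset.mem_insert_self _ _), hnotmem⟩
        intro C hC
        exact hsub (Finset.mem_insert_of_mem (Finset.mem_union_right _ (mem_Bx.2 hC)))
      exact hAΔ ((ihA hA ⟨Δ, hGood⟩).2 (hfrc _ hr))

theorem canon_counter {A : Form} (h : ¬ LCProves A) :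
    ∃ Γ : Wld (subF A), ¬ frc Kle Kr KV A Γ := by
  have hth : ¬ Th (∅ : Finset Form) A := by
    intro hth
    apply h
    have hth' : L (.imp (cj (∅ : Finset Form)) A) := hth
    have hcj : cj (∅ : Finset Form) = Form.top := by simp [cj, cjL]
    rw [hcj] at hth'
    exact hth'.mp l_top
  obtain ⟨Γ, hGood, _, hΓA⟩ := extend (scl_subF A) (Finset.empty_subset _) hth
  have hA : A ∉ Γ := fun h' => hΓA (th_mem h')
  exact ⟨⟨Γ, hGood⟩, fun hf =>
    hA ((truth (scl_subF A) (self_mem_subF A) ⟨Γ, hGood⟩).2 hf)⟩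

lemma card_wld_le (S : Finset Form) : Fintype.card (Wld S) ≤ 2 ^ S.card := by
  have := Fintype.card_le_of_injective
    (fun Γ : Wld S => (⟨Γ.1, Finset.mem_powerset.2 Γ.2.sub⟩ : {x // x ∈ S.powerset}))
    (by intro a b h; apply Subtype.ext; simpa using congrArg Subtype.val h)
  simpa [Finset.card_powerset] using this

end LCDec

namespace LCDec
open Form

/-! ### Bits, masks, bounded boolean quantifiers -/

def bit (c i : ℕ) : Bool := c / 2 ^ i % 2 == 1

lemma bit_eq_true {c i : ℕ} : bit c i = true ↔ c / 2 ^ i % 2 = 1 := by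
  simp [bit]

lemma bit_of_lt {c i : ℕ} (h : c < 2 ^ i) : bit c i = false := by
  simp [bit, Nat.div_eq_of_lt h]

lemma bit_add_pow {c t i : ℕ} (hi : i < t) : bit (c + 2 ^ t) i = bit c i := by
  have ht : t = i + (t - i - 1) + 1 := by omega
  have h : 2 ^ t = 2 ^ i * (2 ^ (t - i - 1) * 2) := by
    conv_lhs => rw [ht]
    rw [pow_add, pow_add, pow_one, mul_assoc]
  unfold bit
  rw [h, Nat.add_mul_div_left _ _ (by positivity : 0 < 2 ^ i), Nat.add_mul_mod_self_right]

lemma bit_add_pow_self {c t : ℕ} (hc : c < 2 ^ t) : bit (c + 2 ^ t) t = true := by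
  unfold bit
  rw [Nat.add_div_right _ (by positivity), Nat.div_eq_of_lt hc]
  rfl

def mask : ℕ → (ℕ → Bool) → ℕ
  | 0, _ => 0
  | t + 1, g => mask t g + (if g t then 2 ^ t else 0)

lemma mask_lt : ∀ (t : ℕ) (g : ℕ → Bool), mask t g < 2 ^ t
  | 0, _ => Nat.one_pos
  | t + 1, g => by
    have := mask_lt t g
    have h2 : (2:ℕ) ^ (t+1) = 2 ^ t + 2 ^ t := by rw [pow_succ]; omega
    by_cases hg : g t <;> simp [mask, hg] <;> omega

lemma bit_mask : ∀ {t : ℕ} (g : ℕ → Bool) {i : ℕ}, i < t → bit (mask t g) i = g i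
  | 0, g, i, h => absurd h (Nat.not_lt_zero i)
  | t + 1, g, i, h => by
    rcases Nat.lt_or_ge i t with hi | hi
    · by_cases hg : g t
      · rw [mask, if_pos hg, bit_add_pow hi, bit_mask g hi]
      · rw [mask, if_neg hg, Nat.add_zero, bit_mask g hi]
    · have hit : i = t := by omega
      subst hit
      by_cases hg : g i
      · rw [mask, if_pos hg, bit_add_pow_self (mask_lt i g), hg]
      · rw [mask, if_neg hg, Nat.add_zero, bit_of_lt (mask_lt i g)]
        exact (Bool.eq_false_iff.2 hg).symm

def bAll : ℕ → (ℕ → Bool) → Bool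
  | 0, _ => true
  | t + 1, g => bAll t g && g t

lemma bAll_eq_true : ∀ {t : ℕ} {g : ℕ → Bool}, bAll t g = true ↔ ∀ i, i < t → g i = true
  | 0, g => by simp [bAll]
  | t + 1, g => by
    rw [bAll, Bool.and_eq_true, bAll_eq_true]
    constructor
    · rintro ⟨h1, h2⟩ i hi
      rcases Nat.lt_or_ge i t with h | h
      · exact h1 i h
      · have : i = t := by omega
        subst this; exact h2
    · intro h
      exact ⟨fun i hi => h i (by omega), h t (by omega)⟩

lemma bimp_eq_true {x y : Bool} : (!x || y) = true ↔ (x = true → y = true) := by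
  cases x <;> cases y <;> simp

/-! ### Code arithmetic -/

lemma pair_ge_add (a b : ℕ) : a + b ≤ Nat.pair a b := by
  unfold Nat.pair
  split
  · nlinarith [show 1 ≤ b by omega]
  · nlinarith

/-! ### The evaluator on codes -/

def pk (m a b c : ℕ) : ℕ := Nat.pair m (Nat.pair a (Nat.pair b c))

lemma sub_lt_code {x : ℕ} (h : 2 ≤ x.unpair.1) : x.unpair.2 < x := by
  have := pair_ge_add x.unpair.1 x.unpair.2
  rw [Nat.pair_unpair] at this
  omega

def Ev (q : ℕ) (x : ℕ) : ℕ :=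
  let m := q.unpair.1
  let a := q.unpair.2.unpair.1
  let b := q.unpair.2.unpair.2.unpair.1
  let c := q.unpair.2.unpair.2.unpair.2
  if h0 : x.unpair.1 = 0 then mask m (fun w => bit c (x.unpair.2 * m + w))
  else if h2 : x.unpair.1 = 2 then
    mask m (fun w => bit (Ev q x.unpair.2.unpair.1) w && bit (Ev q x.unpair.2.unpair.2) w)
  else if h3 : x.unpair.1 = 3 then
    mask m (fun w => bit (Ev q x.unpair.2.unpair.1) w || bit (Ev q x.unpair.2.unpair.2) w)
  else if h4 : x.unpair.1 = 4 then
    mask m (fun w => bAll m (fun v => !(bit a (w * m + v)) ||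
      (!(bit (Ev q x.unpair.2.unpair.1) v) || bit (Ev q x.unpair.2.unpair.2) v)))
  else if h5 : x.unpair.1 = 5 then
    mask m (fun w => bAll m (fun v => !(bit b (w * m + v)) || bit (Ev q x.unpair.2) v))
  else 0
termination_by x
decreasing_by
  · exact lt_of_le_of_lt (Nat.unpair_left_le _) (sub_lt_code (by omega))
  · exact lt_of_le_of_lt (Nat.unpair_right_le _) (sub_lt_code (by omega))
  · exact lt_of_le_of_lt (Nat.unpair_left_le _) (sub_lt_code (by omega))
  · exact lt_of_le_of_lt (Nat.unpair_right_le _) (sub_lt_code (by omega))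
  · exact lt_of_le_of_lt (Nat.unpair_left_le _) (sub_lt_code (by omega))
  · exact lt_of_le_of_lt (Nat.unpair_right_le _) (sub_lt_code (by omega))
  · exact sub_lt_code (by omega)

end LCDec

namespace LCDec
open Form

/-! ### Unfolding the evaluator -/

lemma pk_m (m a b c : ℕ) : (pk m a b c).unpair.1 = m := by simp [pk, Nat.unpair_pair]
lemma pk_a (m a b c : ℕ) : (pk m a b c).unpair.2.unpair.1 = a := by simp [pk, Nat.unpair_pair]
lemma pk_b (m a b c : ℕ) : (pk m a b c).unpair.2.unpair.2.unpair.1 = b := by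
  simp [pk, Nat.unpair_pair]
lemma pk_c (m a b c : ℕ) : (pk m a b c).unpair.2.unpair.2.unpair.2 = c := by
  simp [pk, Nat.unpair_pair]

lemma Ev_pair_0 (q y : ℕ) : Ev q (Nat.pair 0 y) =
    mask q.unpair.1 (fun w => bit q.unpair.2.unpair.2.unpair.2 (y * q.unpair.1 + w)) := by
  rw [Ev]; simp [Nat.unpair_pair]

lemma Ev_pair_1 (q y : ℕ) : Ev q (Nat.pair 1 y) = 0 := by
  rw [Ev]; simp [Nat.unpair_pair]

lemma Ev_pair_2 (q y : ℕ) : Ev q (Nat.pair 2 y) =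
    mask q.unpair.1 (fun w => bit (Ev q y.unpair.1) w && bit (Ev q y.unpair.2) w) := by
  rw [Ev]; simp [Nat.unpair_pair]

lemma Ev_pair_3 (q y : ℕ) : Ev q (Nat.pair 3 y) =
    mask q.unpair.1 (fun w => bit (Ev q y.unpair.1) w || bit (Ev q y.unpair.2) w) := by
  rw [Ev]; simp [Nat.unpair_pair]

lemma Ev_pair_4 (q y : ℕ) : Ev q (Nat.pair 4 y) =
    mask q.unpair.1 (fun w => bAll q.unpair.1 (fun v => !(bit q.unpair.2.unpair.1 (w * q.unpair.1 + v)) ||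
      (!(bit (Ev q y.unpair.1) v) || bit (Ev q y.unpair.2) v))) := by
  rw [Ev]; simp [Nat.unpair_pair]

lemma Ev_pair_5 (q y : ℕ) : Ev q (Nat.pair 5 y) =
    mask q.unpair.1 (fun w => bAll q.unpair.1 (fun v =>
      !(bit q.unpair.2.unpair.2.unpair.1 (w * q.unpair.1 + v)) || bit (Ev q y) v)) := by
  rw [Ev]; simp [Nat.unpair_pair]

/-! ### The model determined by codes -/

def leC (m a : ℕ) (w v : Fin m) : Prop := bit a (w.1 * m + v.1) = true
def rC (m b : ℕ) (w v : Fin m) : Prop := bit b (w.1 * m + v.1) = true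
def VC (m c n : ℕ) (w : Fin m) (k : ℕ) : Prop := k ≤ n ∧ bit c (k * m + w.1) = true

def condB (m a b c n : ℕ) : Bool :=
  bAll m (fun i => bit a (i * m + i)) &&
  (bAll m (fun i => bAll m (fun j => bAll m (fun k =>
     !(bit a (i * m + j)) || (!(bit a (j * m + k)) || bit a (i * m + k))))) &&
  (bAll m (fun i => bAll m (fun j => bAll m (fun k =>
     !(bit a (i * m + j)) || (!(bit b (j * m + k)) || bit b (i * m + k))))) &&
  (bAll m (fun i => bAll m (fun j => bAll (n + 1) (fun k =>
     !(bit a (i * m + j)) || (!(bit c (k * m + i)) || bit c (k * m + j))))) &&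
  (bAll m (fun i => bAll m (fun j => bAll m (fun k =>
     !(bit b (i * m + j)) || (!(bit b (j * m + k)) || bit b (i * m + k))))) &&
  bAll m (fun i => bAll m (fun j =>
     !(bit b (i * m + j)) || (bit a (i * m + j) && !(bit a (j * m + i)))))))))

lemma cond_of_condB {m a b c n : ℕ} (h : condB m a b c n = true) :
    Cond (leC m a) (rC m b) (VC m c n) := by
  rw [condB, Bool.and_eq_true, Bool.and_eq_true, Bool.and_eq_true, Bool.and_eq_true,
    Bool.and_eq_true] at h
  obtain ⟨h1, h2, h3, h4, h5, h6⟩ := h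
  have H2 : ∀ i j k : Fin m, leC m a i j → leC m a j k → leC m a i k := fun i j k hij hjk =>
    bimp_eq_true.1 (bimp_eq_true.1
      (bAll_eq_true.1 (bAll_eq_true.1 (bAll_eq_true.1 h2 i.1 i.2) j.1 j.2) k.1 k.2) hij) hjk
  have H3 : ∀ i j k : Fin m, leC m a i j → rC m b j k → rC m b i k := fun i j k hij hjk =>
    bimp_eq_true.1 (bimp_eq_true.1
      (bAll_eq_true.1 (bAll_eq_true.1 (bAll_eq_true.1 h3 i.1 i.2) j.1 j.2) k.1 k.2) hij) hjk
  have H5 : ∀ i j k : Fin m, rC m b i j → rC m b j k → rC m b i k := fun i j k hij hjk =>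
    bimp_eq_true.1 (bimp_eq_true.1
      (bAll_eq_true.1 (bAll_eq_true.1 (bAll_eq_true.1 h5 i.1 i.2) j.1 j.2) k.1 k.2) hij) hjk
  have H6 : ∀ i j : Fin m, rC m b i j → leC m a i j ∧ (bit a (j.1 * m + i.1)) = false :=
    fun i j hij => by
      have := bimp_eq_true.1 (bAll_eq_true.1 (bAll_eq_true.1 h6 i.1 i.2) j.1 j.2) hij
      rw [Bool.and_eq_true] at this
      exact ⟨this.1, by simpa using this.2⟩
  refine ⟨fun w => bAll_eq_true.1 h1 w.1 w.2, fun {x y z} => H2 x y z, fun {x y z} => H3 x y z,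
    ?_, fun {x y z} => H5 x y z, fun {x y} h => (H6 x y h).1, ?_⟩
  · rintro i j k hij ⟨hk, hbit⟩
    refine ⟨hk, ?_⟩
    exact bimp_eq_true.1 (bimp_eq_true.1
      (bAll_eq_true.1 (bAll_eq_true.1 (bAll_eq_true.1 h4 i.1 i.2) j.1 j.2) k (by omega)) hij) hbit
  · have hirr : ∀ x : Fin m, ¬ rC m b x x := by
      intro x hx
      have h := H6 x x hx
      have h1 : bit a (x.1 * m + x.1) = true := h.1
      rw [h.2] at h1
      exact Bool.false_ne_true h1
    haveI : IsTrans (Fin m) (fun x y => rC m b y x) := ⟨fun x y z hxy hyz => H5 z y x hyz hxy⟩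
    haveI : IsIrrefl (Fin m) (fun x y => rC m b y x) := ⟨hirr⟩
    exact Finite.wellFounded_of_trans_of_irrefl _

/-! ### Bridge between the evaluator and forcing -/

lemma enc_left {A B : Form} {t : ℕ} :
    encodeForm A ≤ Nat.pair t (Nat.pair (encodeForm A) (encodeForm B)) :=
  le_trans (Nat.left_le_pair _ _) (Nat.right_le_pair _ _)
lemma enc_right {A B : Form} {t : ℕ} :
    encodeForm B ≤ Nat.pair t (Nat.pair (encodeForm A) (encodeForm B)) :=
  le_trans (Nat.right_le_pair _ _) (Nat.right_le_pair _ _)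

lemma bridge {m a b c n : ℕ} :
    ∀ {A : Form}, encodeForm A ≤ n → ∀ w : Fin m,
      (bit (Ev (pk m a b c) (encodeForm A)) w.1 = true ↔
        frc (leC m a) (rC m b) (VC m c n) A w) := by
  intro A
  induction A with
  | var k =>
    intro hle w
    rw [show encodeForm (.var k) = Nat.pair 0 k from rfl, Ev_pair_0, pk_m, pk_c,
      bit_mask _ w.2]
    constructor
    · intro h
      exact ⟨le_trans (Nat.right_le_pair 0 k) hle, h⟩
    · rintro ⟨_, h⟩; exact h
  | bot =>
    intro hle w
    rw [show encodeForm .bot = Nat.pair 1 0 from rfl, Ev_pair_1]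
    simp only [bit_of_lt (show (0:ℕ) < 2 ^ w.1 by positivity)]
    simp [frc]
  | and A B ihA ihB =>
    intro hle w
    rw [show encodeForm (.and A B) = Nat.pair 2 (Nat.pair (encodeForm A) (encodeForm B))
      from rfl, Ev_pair_2, pk_m]
    simp only [Nat.unpair_pair]
    rw [bit_mask _ w.2, Bool.and_eq_true]
    exact and_congr (ihA (le_trans enc_left hle) w) (ihB (le_trans enc_right hle) w)
  | or A B ihA ihB =>
    intro hle w
    rw [show encodeForm (.or A B) = Nat.pair 3 (Nat.pair (encodeForm A) (encodeForm B))
      from rfl, Ev_pair_3, pk_m]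
    simp only [Nat.unpair_pair]
    rw [bit_mask _ w.2, Bool.or_eq_true]
    exact or_congr (ihA (le_trans enc_left hle) w) (ihB (le_trans enc_right hle) w)
  | imp A B ihA ihB =>
    intro hle w
    rw [show encodeForm (.imp A B) = Nat.pair 4 (Nat.pair (encodeForm A) (encodeForm B))
      from rfl, Ev_pair_4, pk_m, pk_a]
    simp only [Nat.unpair_pair]
    rw [bit_mask _ w.2, bAll_eq_true]
    constructor
    · intro h v hlev hfv
      exact (ihB (le_trans enc_right hle) v).1
        (bimp_eq_true.1 (bimp_eq_true.1 (h v.1 v.2) hlev)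
          ((ihA (le_trans enc_left hle) v).2 hfv))
    · intro h v hv
      rw [bimp_eq_true]; intro hlev
      rw [bimp_eq_true]; intro hfa
      exact (ihB (le_trans enc_right hle) ⟨v, hv⟩).2
        (h ⟨v, hv⟩ hlev ((ihA (le_trans enc_left hle) ⟨v, hv⟩).1 hfa))
  | box A ihA =>
    intro hle w
    rw [show encodeForm (.box A) = Nat.pair 5 (encodeForm A) from rfl, Ev_pair_5, pk_m, pk_b]
    rw [bit_mask _ w.2, bAll_eq_true]
    have hA : encodeForm A ≤ n := le_trans (Nat.right_le_pair _ _) hle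
    constructor
    · intro h v hrv
      exact (ihA hA v).1 (bimp_eq_true.1 (h v.1 v.2) hrv)
    · intro h v hv
      rw [bimp_eq_true]; intro hrv
      exact (ihA hA ⟨v, hv⟩).2 (h ⟨v, hv⟩ hrv)

/-! ### The decision function -/

def FB (n : ℕ) : Bool :=
  bAll (2 ^ (n + 1) + 1) (fun m =>
    bAll (2 ^ (m * m)) (fun a => bAll (2 ^ (m * m)) (fun b => bAll (2 ^ ((n + 1) * m)) (fun c =>
      !(condB m a b c n) || bAll m (fun w => bit (Ev (pk m a b c) n) w)))))

lemma FB_of_provable {A : Form} (h : LCProves A) : FB (encodeForm A) = true := by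
  rw [FB, bAll_eq_true]
  intro m _
  rw [bAll_eq_true]; intro a _
  rw [bAll_eq_true]; intro b _
  rw [bAll_eq_true]; intro c _
  rw [bimp_eq_true]; intro hcond
  rw [bAll_eq_true]; intro w hw
  exact (bridge (le_refl _) ⟨w, hw⟩).2 (sound h (cond_of_condB hcond) ⟨w, hw⟩)

/-! ### size bounds -/

def szF : Form → ℕ
  | .var _ => 1
  | .bot => 1
  | .and A B => szF A + szF B + 1
  | .or A B => szF A + szF B + 1
  | .imp A B => szF A + szF B + 1
  | .box A => szF A + 1

lemma card_subF_le : ∀ A : Form, (subF A).card ≤ szF A := by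
  intro A
  induction A with
  | var n => simp [subF, szF]
  | bot => simp [subF, szF]
  | and A B ihA ihB =>
    calc (subF (.and A B)).card ≤ (subF A ∪ subF B).card + 1 := Finset.card_insert_le _ _
    _ ≤ (subF A).card + (subF B).card + 1 := by
        have := Finset.card_union_le (subF A) (subF B); omega
    _ ≤ szF (.and A B) := by rw [szF]; omega
  | or A B ihA ihB =>
    calc (subF (.or A B)).card ≤ (subF A ∪ subF B).card + 1 := Finset.card_insert_le _ _
    _ ≤ (subF A).card + (subF B).card + 1 := by
        have := Finset.card_union_le (subF A) (subF B); omega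
    _ ≤ szF (.or A B) := by rw [szF]; omega
  | imp A B ihA ihB =>
    calc (subF (.imp A B)).card ≤ (subF A ∪ subF B).card + 1 := Finset.card_insert_le _ _
    _ ≤ (subF A).card + (subF B).card + 1 := by
        have := Finset.card_union_le (subF A) (subF B); omega
    _ ≤ szF (.imp A B) := by rw [szF]; omega
  | box A ihA =>
    calc (subF (.box A)).card ≤ (subF A).card + 1 := Finset.card_insert_le _ _
    _ ≤ szF (.box A) := by rw [szF]; omega

lemma szF_le : ∀ A : Form, szF A ≤ encodeForm A + 1 := by
  intro A
  induction A with
  | var n => rw [szF, encodeForm]; omega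
  | bot => rw [szF, encodeForm]; omega
  | and A B ihA ihB =>
    rw [szF, encodeForm]
    have h1 := pair_ge_add (encodeForm A) (encodeForm B)
    have h2 := pair_ge_add 2 (Nat.pair (encodeForm A) (encodeForm B))
    omega
  | or A B ihA ihB =>
    rw [szF, encodeForm]
    have h1 := pair_ge_add (encodeForm A) (encodeForm B)
    have h2 := pair_ge_add 3 (Nat.pair (encodeForm A) (encodeForm B))
    omega
  | imp A B ihA ihB =>
    rw [szF, encodeForm]
    have h1 := pair_ge_add (encodeForm A) (encodeForm B)
    have h2 := pair_ge_add 4 (Nat.pair (encodeForm A) (encodeForm B))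
    omega
  | box A ihA =>
    rw [szF, encodeForm]
    have h2 := pair_ge_add 5 (encodeForm A)
    omega

end LCDec

namespace LCDec
open Form

lemma frc_transfer {W₁ W₂ : Type} (e : W₁ ≃ W₂) {le₁ r₁ : W₁ → W₁ → Prop} {V₁ : W₁ → ℕ → Prop}
    {le₂ r₂ : W₂ → W₂ → Prop} {V₂ : W₂ → ℕ → Prop} {N : ℕ}
    (hle : ∀ w v : W₁, le₂ (e w) (e v) ↔ le₁ w v)
    (hr : ∀ w v : W₁, r₂ (e w) (e v) ↔ r₁ w v)
    (hV : ∀ (w : W₁) (k : ℕ), k ≤ N → (V₂ (e w) k ↔ V₁ w k)) :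
    ∀ {A : Form}, encodeForm A ≤ N → ∀ w : W₁,
      (frc le₂ r₂ V₂ A (e w) ↔ frc le₁ r₁ V₁ A w) := by
  intro A
  induction A with
  | var k => intro hle' w; exact hV w k (le_trans (Nat.right_le_pair 0 k) hle')
  | bot => intro _ w; exact Iff.rfl
  | and A B ihA ihB =>
    intro h w
    exact and_congr (ihA (le_trans enc_left h) w) (ihB (le_trans enc_right h) w)
  | or A B ihA ihB =>
    intro h w
    exact or_congr (ihA (le_trans enc_left h) w) (ihB (le_trans enc_right h) w)
  | imp A B ihA ihB =>
    intro h w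
    constructor
    · intro hf v hlev hfa
      exact (ihB (le_trans enc_right h) v).1
        (hf (e v) ((hle w v).2 hlev) ((ihA (le_trans enc_left h) v).2 hfa))
    · intro hf v hlev hfa
      rw [show v = e (e.symm v) from (e.apply_symm_apply v).symm] at hlev hfa ⊢
      exact (ihB (le_trans enc_right h) _).2
        (hf (e.symm v) ((hle w _).1 hlev) ((ihA (le_trans enc_left h) _).1 hfa))
  | box A ihA =>
    intro h w
    have hA : encodeForm A ≤ N := le_trans (Nat.right_le_pair 5 _) h
    constructor
    · intro hf v hrv
      exact (ihA hA v).1 (hf (e v) ((hr w v).2 hrv))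
    · intro hf v hrv
      rw [show v = e (e.symm v) from (e.apply_symm_apply v).symm] at hrv ⊢
      exact (ihA hA _).2 (hf (e.symm v) ((hr w _).1 hrv))

theorem FB_complete {A : Form} (hFB : FB (encodeForm A) = true) : LCProves A := by
  by_contra hA
  classical
  set S := subF A with hS
  set n := encodeForm A with hn
  set m := Fintype.card (Wld S) with hm
  set e := Fintype.equivFin (Wld S) with he
  obtain ⟨Γ₀, hΓ₀⟩ := canon_counter hA
  have hm0 : 0 < m := Fintype.card_pos_iff.2 ⟨Γ₀⟩
  have hidx : ∀ i j : Fin m, i.1 * m + j.1 < m * m := by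
    intro i j
    have hi := i.2; have hj := j.2
    nlinarith
  have hdiv : ∀ (i : ℕ) (j : Fin m), (i * m + j.1) / m = i := by
    intro i j
    rw [show i * m + j.1 = m * i + j.1 by ring, Nat.mul_add_div hm0, Nat.div_eq_of_lt j.2]
    omega
  have hmod : ∀ (i : ℕ) (j : Fin m), (i * m + j.1) % m = j.1 := by
    intro i j
    rw [show i * m + j.1 = m * i + j.1 by ring, Nat.mul_add_mod, Nat.mod_eq_of_lt j.2]
  set gle : ℕ → Bool := fun idx =>
    decide (Kle (e.symm ⟨idx / m % m, Nat.mod_lt _ hm0⟩) (e.symm ⟨idx % m, Nat.mod_lt _ hm0⟩))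
    with hgle
  set gr : ℕ → Bool := fun idx =>
    decide (Kr (e.symm ⟨idx / m % m, Nat.mod_lt _ hm0⟩) (e.symm ⟨idx % m, Nat.mod_lt _ hm0⟩))
    with hgr
  set gV : ℕ → Bool := fun idx =>
    decide (KV (e.symm ⟨idx % m, Nat.mod_lt _ hm0⟩) (idx / m)) with hgV
  set a := mask (m * m) gle with ha
  set b := mask (m * m) gr with hb
  set c := mask ((n + 1) * m) gV with hc
  have hfin : ∀ i : Fin m, (⟨i.1 % m, Nat.mod_lt _ hm0⟩ : Fin m) = i :=
    fun i => Fin.ext (Nat.mod_eq_of_lt i.2)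
  have hbita : ∀ i j : Fin m, bit a (i.1 * m + j.1) = decide (Kle (e.symm i) (e.symm j)) := by
    intro i j
    rw [ha, bit_mask _ (hidx i j)]
    show decide (Kle (e.symm ⟨(i.1 * m + j.1) / m % m, Nat.mod_lt _ hm0⟩)
      (e.symm ⟨(i.1 * m + j.1) % m, Nat.mod_lt _ hm0⟩)) = _
    have e1 : (⟨(i.1 * m + j.1) / m % m, Nat.mod_lt _ hm0⟩ : Fin m) = i :=
      Fin.ext (by rw [hdiv i.1 j]; exact Nat.mod_eq_of_lt i.2)
    have e2 : (⟨(i.1 * m + j.1) % m, Nat.mod_lt _ hm0⟩ : Fin m) = j := Fin.ext (hmod i.1 j)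
    rw [e1, e2]
  have hbitb : ∀ i j : Fin m, bit b (i.1 * m + j.1) = decide (Kr (e.symm i) (e.symm j)) := by
    intro i j
    rw [hb, bit_mask _ (hidx i j)]
    show decide (Kr (e.symm ⟨(i.1 * m + j.1) / m % m, Nat.mod_lt _ hm0⟩)
      (e.symm ⟨(i.1 * m + j.1) % m, Nat.mod_lt _ hm0⟩)) = _
    have e1 : (⟨(i.1 * m + j.1) / m % m, Nat.mod_lt _ hm0⟩ : Fin m) = i :=
      Fin.ext (by rw [hdiv i.1 j]; exact Nat.mod_eq_of_lt i.2)
    have e2 : (⟨(i.1 * m + j.1) % m, Nat.mod_lt _ hm0⟩ : Fin m) = j := Fin.ext (hmod i.1 j)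
    rw [e1, e2]
  have hbitc : ∀ (k : ℕ), k ≤ n → ∀ w : Fin m,
      bit c (k * m + w.1) = decide (KV (e.symm w) k) := by
    intro k hk w
    have hlt : k * m + w.1 < (n + 1) * m := by
      have hw := w.2
      nlinarith
    rw [hc, bit_mask _ hlt]
    show decide (KV (e.symm ⟨(k * m + w.1) % m, Nat.mod_lt _ hm0⟩) ((k * m + w.1) / m)) = _
    have e2 : (⟨(k * m + w.1) % m, Nat.mod_lt _ hm0⟩ : Fin m) = w := Fin.ext (hmod k w)
    rw [e2, hdiv k w]
  have hC := cond_canon S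
  have hKrKle : ∀ x y : Wld S, Kr x y → ¬ Kle y x := by
    intro x y hxy hyx
    have h1 := Kr_card hxy
    have h2 := Finset.card_le_card hyx
    omega
  have hcond : condB m a b c n = true := by
    rw [condB, Bool.and_eq_true, Bool.and_eq_true, Bool.and_eq_true, Bool.and_eq_true,
      Bool.and_eq_true]
    refine ⟨?_, ?_, ?_, ?_, ?_, ?_⟩
    · rw [bAll_eq_true]; intro i hi
      rw [hbita ⟨i, hi⟩ ⟨i, hi⟩]
      exact decide_eq_true (hC.refl _)
    · rw [bAll_eq_true]; intro i hi
      rw [bAll_eq_true]; intro j hj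
      rw [bAll_eq_true]; intro k hk
      rw [bimp_eq_true]; intro h1
      rw [bimp_eq_true]; intro h2
      rw [hbita ⟨i, hi⟩ ⟨j, hj⟩] at h1
      rw [hbita ⟨j, hj⟩ ⟨k, hk⟩] at h2
      rw [hbita ⟨i, hi⟩ ⟨k, hk⟩]
      exact decide_eq_true (hC.trans (of_decide_eq_true h1) (of_decide_eq_true h2))
    · rw [bAll_eq_true]; intro i hi
      rw [bAll_eq_true]; intro j hj
      rw [bAll_eq_true]; intro k hk
      rw [bimp_eq_true]; intro h1
      rw [bimp_eq_true]; intro h2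
      rw [hbita ⟨i, hi⟩ ⟨j, hj⟩] at h1
      rw [hbitb ⟨j, hj⟩ ⟨k, hk⟩] at h2
      rw [hbitb ⟨i, hi⟩ ⟨k, hk⟩]
      exact decide_eq_true (hC.le_r (of_decide_eq_true h1) (of_decide_eq_true h2))
    · rw [bAll_eq_true]; intro i hi
      rw [bAll_eq_true]; intro j hj
      rw [bAll_eq_true]; intro k hk
      rw [bimp_eq_true]; intro h1
      rw [bimp_eq_true]; intro h2
      rw [hbita ⟨i, hi⟩ ⟨j, hj⟩] at h1
      rw [hbitc k (by omega) ⟨i, hi⟩] at h2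
      rw [hbitc k (by omega) ⟨j, hj⟩]
      exact decide_eq_true (hC.mono (of_decide_eq_true h1) (of_decide_eq_true h2))
    · rw [bAll_eq_true]; intro i hi
      rw [bAll_eq_true]; intro j hj
      rw [bAll_eq_true]; intro k hk
      rw [bimp_eq_true]; intro h1
      rw [bimp_eq_true]; intro h2
      rw [hbitb ⟨i, hi⟩ ⟨j, hj⟩] at h1
      rw [hbitb ⟨j, hj⟩ ⟨k, hk⟩] at h2
      rw [hbitb ⟨i, hi⟩ ⟨k, hk⟩]
      exact decide_eq_true (hC.rtrans (of_decide_eq_true h1) (of_decide_eq_true h2))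
    · rw [bAll_eq_true]; intro i hi
      rw [bAll_eq_true]; intro j hj
      rw [bimp_eq_true]; intro h1
      rw [hbitb ⟨i, hi⟩ ⟨j, hj⟩] at h1
      rw [Bool.and_eq_true, hbita ⟨i, hi⟩ ⟨j, hj⟩, hbita ⟨j, hj⟩ ⟨i, hi⟩]
      refine ⟨decide_eq_true (hC.rsub (of_decide_eq_true h1)), ?_⟩
      have hnle : ¬ Kle (e.symm ⟨j, hj⟩) (e.symm ⟨i, hi⟩) :=
        hKrKle _ _ (of_decide_eq_true h1)
      simp [hnle]
  have hmle : m ≤ 2 ^ (n + 1) := by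
    calc m ≤ 2 ^ S.card := card_wld_le S
    _ ≤ 2 ^ (n + 1) := Nat.pow_le_pow_right (by norm_num) (by
        have h1 : S.card ≤ szF A := card_subF_le A
        have h2 := szF_le A
        omega)
  rw [FB, bAll_eq_true] at hFB
  have s1 := hFB m (by omega)
  rw [bAll_eq_true] at s1
  have s2 := s1 a (mask_lt _ _)
  rw [bAll_eq_true] at s2
  have s3 := s2 b (mask_lt _ _)
  rw [bAll_eq_true] at s3
  have s4 := s3 c (mask_lt _ _)
  rw [bimp_eq_true] at s4
  have s5 := s4 hcond
  rw [bAll_eq_true] at s5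
  have s6 := s5 (e Γ₀).1 (e Γ₀).2
  have hfrc : frc (leC m a) (rC m b) (VC m c n) A (e Γ₀) := by
    have := (bridge (m := m) (a := a) (b := b) (c := c) (n := n) (A := A) (le_refl _) (e Γ₀)).1
    exact this s6
  apply hΓ₀
  refine (frc_transfer e (le₁ := Kle) (r₁ := Kr) (V₁ := KV) (N := n)
    (le₂ := leC m a) (r₂ := rC m b) (V₂ := VC m c n) ?_ ?_ ?_ (le_refl n) Γ₀).1 hfrc
  · intro w v
    show (bit a ((e w).1 * m + (e v).1) = true) ↔ _
    rw [hbita (e w) (e v), decide_eq_true_iff, e.symm_apply_apply, e.symm_apply_apply]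
  · intro w v
    show (bit b ((e w).1 * m + (e v).1) = true) ↔ _
    rw [hbitb (e w) (e v), decide_eq_true_iff, e.symm_apply_apply, e.symm_apply_apply]
  · intro w k hk
    show (k ≤ n ∧ bit c (k * m + (e w).1) = true) ↔ _
    rw [hbitc k hk (e w), decide_eq_true_iff, e.symm_apply_apply]
    exact ⟨fun h => h.2, fun h => ⟨hk, h⟩⟩

theorem FB_iff (A : Form) : LCProves A ↔ FB (encodeForm A) = true :=
  ⟨FB_of_provable, FB_complete⟩

end LCDec

namespace LCDec
open Primrec

private lemma pr_pow : Primrec₂ (fun a b : ℕ => a ^ b) := Primrec₂.unpaired'.1 Nat.Primrec.pow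

private lemma pr_bit : Primrec₂ bit := by
  have h1 : Primrec fun p : ℕ × ℕ => p.1 / 2 ^ p.2 % 2 :=
    nat_mod.comp (nat_div.comp fst (pr_pow.comp (const 2) snd)) (const 2)
  have h2 : Primrec fun p : ℕ × ℕ => bit p.1 p.2 :=
    (Primrec.beq.comp h1 (const 1)).of_eq fun p => rfl
  exact h2

private lemma bAll_eq_rec (g : ℕ → Bool) :
    ∀ t, bAll t g = Nat.rec true (fun n IH => IH && g n) t
  | 0 => rfl
  | t + 1 => by rw [bAll, bAll_eq_rec g t]

private lemma mask_eq_rec (g : ℕ → Bool) :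
    ∀ t, mask t g = Nat.rec 0 (fun n IH => IH + (bif g n then 2 ^ n else 0)) t
  | 0 => rfl
  | t + 1 => by
    rw [mask, mask_eq_rec g t,
      show (Nat.rec 0 (fun n IH => IH + (bif g n then 2 ^ n else 0)) (t + 1) : ℕ)
        = Nat.rec 0 (fun n IH => IH + (bif g n then 2 ^ n else 0)) t
          + (bif g t then 2 ^ t else 0) from rfl,
      Bool.cond_eq_ite]

private lemma pr_bAll {α : Type} [Primcodable α] {F : α → ℕ} {G : α → ℕ → Bool}
    (hF : Primrec F) (hG : Primrec₂ G) : Primrec fun x => bAll (F x) (G x) := by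
  have hstep : Primrec₂ fun (x : α) (p : ℕ × Bool) => p.2 && G x p.1 :=
    Primrec.and.comp (snd.comp snd) (hG.comp fst (fst.comp snd))
  have h : Primrec₂ fun (x : α) (t : ℕ) => bAll t (G x) := by
    have h0 := Primrec.nat_rec (f := fun _ : α => true)
      (g := fun (x : α) (p : ℕ × Bool) => p.2 && G x p.1) (const true) hstep
    exact h0.of_eq fun a t => (bAll_eq_rec (G a) t).symm
  exact h.comp Primrec.id hF

private lemma pr_mask {α : Type} [Primcodable α] {F : α → ℕ} {G : α → ℕ → Bool}
    (hF : Primrec F) (hG : Primrec₂ G) : Primrec fun x => mask (F x) (G x) := by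
  have hstep : Primrec₂ fun (x : α) (p : ℕ × ℕ) => p.2 + (bif G x p.1 then 2 ^ p.1 else 0) :=
    nat_add.comp (snd.comp snd)
      (Primrec.cond (hG.comp fst (fst.comp snd)) (pr_pow.comp (const 2) (fst.comp snd))
        (const 0))
  have h : Primrec₂ fun (x : α) (t : ℕ) => mask t (G x) := by
    have h0 := Primrec.nat_rec (f := fun _ : α => 0)
      (g := fun (x : α) (p : ℕ × ℕ) => p.2 + (bif G x p.1 then 2 ^ p.1 else 0)) (const 0) hstep
    exact h0.of_eq fun a t => (mask_eq_rec (G a) t).symm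
  exact h.comp Primrec.id hF

/-- non-recursive version of `Ev`, taking the list of previous values. -/
def EvG (q : ℕ) (l : List ℕ) : ℕ :=
  let x := l.length
  let m := q.unpair.1
  let a := q.unpair.2.unpair.1
  let b := q.unpair.2.unpair.2.unpair.1
  let c := q.unpair.2.unpair.2.unpair.2
  if x.unpair.1 = 0 then mask m (fun w => bit c (x.unpair.2 * m + w))
  else if x.unpair.1 = 2 then
    mask m (fun w => bit (l.getD x.unpair.2.unpair.1 0) w && bit (l.getD x.unpair.2.unpair.2 0) w)
  else if x.unpair.1 = 3 then
    mask m (fun w => bit (l.getD x.unpair.2.unpair.1 0) w || bit (l.getD x.unpair.2.unpair.2 0) w)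
  else if x.unpair.1 = 4 then
    mask m (fun w => bAll m (fun v => !(bit a (w * m + v)) ||
      (!(bit (l.getD x.unpair.2.unpair.1 0) v) || bit (l.getD x.unpair.2.unpair.2 0) v)))
  else if x.unpair.1 = 5 then
    mask m (fun w => bAll m (fun v => !(bit b (w * m + v)) || bit (l.getD x.unpair.2 0) v))
  else 0

private lemma getD_map_range (f : ℕ → ℕ) {k x : ℕ} (h : k < x) :
    ((List.range x).map f).getD k 0 = f k := by
  rw [List.getD_eq_getElem?_getD, List.getElem?_map, List.getElem?_range h]
  rfl

private lemma EvG_spec (q x : ℕ) : EvG q ((List.range x).map (Ev q)) = Ev q x := by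
  have hlen : ((List.range x).map (Ev q)).length = x := by simp
  rw [Ev]
  unfold EvG
  simp only [hlen]
  split_ifs with h0 h2 h3 h4 h5
  · rfl
  · have hy : x.unpair.2 < x := sub_lt_code (by omega)
    have h1 : x.unpair.2.unpair.1 < x := lt_of_le_of_lt (Nat.unpair_left_le _) hy
    have h2' : x.unpair.2.unpair.2 < x := lt_of_le_of_lt (Nat.unpair_right_le _) hy
    simp only [getD_map_range (Ev q) h1, getD_map_range (Ev q) h2']
  · have hy : x.unpair.2 < x := sub_lt_code (by omega)
    have h1 : x.unpair.2.unpair.1 < x := lt_of_le_of_lt (Nat.unpair_left_le _) hy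
    have h2' : x.unpair.2.unpair.2 < x := lt_of_le_of_lt (Nat.unpair_right_le _) hy
    simp only [getD_map_range (Ev q) h1, getD_map_range (Ev q) h2']
  · have hy : x.unpair.2 < x := sub_lt_code (by omega)
    have h1 : x.unpair.2.unpair.1 < x := lt_of_le_of_lt (Nat.unpair_left_le _) hy
    have h2' : x.unpair.2.unpair.2 < x := lt_of_le_of_lt (Nat.unpair_right_le _) hy
    simp only [getD_map_range (Ev q) h1, getD_map_range (Ev q) h2']
  · have hy : x.unpair.2 < x := sub_lt_code (by omega)
    simp only [getD_map_range (Ev q) hy]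
  · rfl

private lemma pr_EvG : Primrec₂ EvG := by
  have pq : Primrec fun p : ℕ × List ℕ => p.1 := fst
  have px : Primrec fun p : ℕ × List ℕ => p.2.length := list_length.comp snd
  have pm : Primrec fun p : ℕ × List ℕ => p.1.unpair.1 := fst.comp (unpair.comp fst)
  have pq2 : Primrec fun p : ℕ × List ℕ => p.1.unpair.2 := snd.comp (unpair.comp fst)
  have pa : Primrec fun p : ℕ × List ℕ => p.1.unpair.2.unpair.1 := fst.comp (unpair.comp pq2)
  have pbc : Primrec fun p : ℕ × List ℕ => p.1.unpair.2.unpair.2 := snd.comp (unpair.comp pq2)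
  have pb : Primrec fun p : ℕ × List ℕ => p.1.unpair.2.unpair.2.unpair.1 :=
    fst.comp (unpair.comp pbc)
  have pc : Primrec fun p : ℕ × List ℕ => p.1.unpair.2.unpair.2.unpair.2 :=
    snd.comp (unpair.comp pbc)
  have pt : Primrec fun p : ℕ × List ℕ => p.2.length.unpair.1 := fst.comp (unpair.comp px)
  have py : Primrec fun p : ℕ × List ℕ => p.2.length.unpair.2 := snd.comp (unpair.comp px)
  have py1 : Primrec fun p : ℕ × List ℕ => p.2.length.unpair.2.unpair.1 :=
    fst.comp (unpair.comp py)
  have py2 : Primrec fun p : ℕ × List ℕ => p.2.length.unpair.2.unpair.2 :=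
    snd.comp (unpair.comp py)
  have pe1 : Primrec fun p : ℕ × List ℕ => p.2.getD p.2.length.unpair.2.unpair.1 0 :=
    (list_getD 0).comp snd py1
  have pe2 : Primrec fun p : ℕ × List ℕ => p.2.getD p.2.length.unpair.2.unpair.2 0 :=
    (list_getD 0).comp snd py2
  have pe0 : Primrec fun p : ℕ × List ℕ => p.2.getD p.2.length.unpair.2 0 :=
    (list_getD 0).comp snd py
  -- branches
  have br0 : Primrec fun p : ℕ × List ℕ =>
      mask p.1.unpair.1 (fun w => bit p.1.unpair.2.unpair.2.unpair.2
        (p.2.length.unpair.2 * p.1.unpair.1 + w)) :=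
    pr_mask pm (pr_bit.comp (pc.comp fst)
      (nat_add.comp (nat_mul.comp (py.comp fst) (pm.comp fst)) snd))
  have br2 : Primrec fun p : ℕ × List ℕ =>
      mask p.1.unpair.1 (fun w => bit (p.2.getD p.2.length.unpair.2.unpair.1 0) w &&
        bit (p.2.getD p.2.length.unpair.2.unpair.2 0) w) :=
    pr_mask pm (Primrec.and.comp (pr_bit.comp (pe1.comp fst) snd)
      (pr_bit.comp (pe2.comp fst) snd))
  have br3 : Primrec fun p : ℕ × List ℕ =>
      mask p.1.unpair.1 (fun w => bit (p.2.getD p.2.length.unpair.2.unpair.1 0) w ||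
        bit (p.2.getD p.2.length.unpair.2.unpair.2 0) w) :=
    pr_mask pm (Primrec.or.comp (pr_bit.comp (pe1.comp fst) snd)
      (pr_bit.comp (pe2.comp fst) snd))
  have br4 : Primrec fun p : ℕ × List ℕ =>
      mask p.1.unpair.1 (fun w => bAll p.1.unpair.1 (fun v =>
        !(bit p.1.unpair.2.unpair.1 (w * p.1.unpair.1 + v)) ||
        (!(bit (p.2.getD p.2.length.unpair.2.unpair.1 0) v) ||
          bit (p.2.getD p.2.length.unpair.2.unpair.2 0) v))) := by
    apply pr_mask pm
    apply pr_bAll (pm.comp fst)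
    exact Primrec.or.comp
      (Primrec.not.comp (pr_bit.comp (pa.comp (fst.comp fst))
        (nat_add.comp (nat_mul.comp (snd.comp fst) (pm.comp (fst.comp fst))) snd)))
      (Primrec.or.comp
        (Primrec.not.comp (pr_bit.comp (pe1.comp (fst.comp fst)) snd))
        (pr_bit.comp (pe2.comp (fst.comp fst)) snd))
  have br5 : Primrec fun p : ℕ × List ℕ =>
      mask p.1.unpair.1 (fun w => bAll p.1.unpair.1 (fun v =>
        !(bit p.1.unpair.2.unpair.2.unpair.1 (w * p.1.unpair.1 + v)) ||
          bit (p.2.getD p.2.length.unpair.2 0) v)) := by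
    apply pr_mask pm
    apply pr_bAll (pm.comp fst)
    exact Primrec.or.comp
      (Primrec.not.comp (pr_bit.comp (pb.comp (fst.comp fst))
        (nat_add.comp (nat_mul.comp (snd.comp fst) (pm.comp (fst.comp fst))) snd)))
      (pr_bit.comp (pe0.comp (fst.comp fst)) snd)
  have c0 : PrimrecPred fun p : ℕ × List ℕ => p.2.length.unpair.1 = 0 :=
    Primrec.eq.comp pt (const 0)
  have c2 : PrimrecPred fun p : ℕ × List ℕ => p.2.length.unpair.1 = 2 :=
    Primrec.eq.comp pt (const 2)
  have c3 : PrimrecPred fun p : ℕ × List ℕ => p.2.length.unpair.1 = 3 :=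
    Primrec.eq.comp pt (const 3)
  have c4 : PrimrecPred fun p : ℕ × List ℕ => p.2.length.unpair.1 = 4 :=
    Primrec.eq.comp pt (const 4)
  have c5 : PrimrecPred fun p : ℕ × List ℕ => p.2.length.unpair.1 = 5 :=
    Primrec.eq.comp pt (const 5)
  have hif := Primrec.ite c0 br0 (Primrec.ite c2 br2 (Primrec.ite c3 br3
    (Primrec.ite c4 br4 (Primrec.ite c5 br5 (const 0)))))
  exact hif.of_eq fun p => rfl

private lemma pr_Ev : Primrec₂ Ev :=
  Primrec.nat_strong_rec Ev (g := fun q l => some (EvG q l))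
    (Primrec.option_some.comp pr_EvG)
    (fun q x => congrArg some (EvG_spec q x))

private lemma pr_condB {α : Type} [Primcodable α] {M A B C N : α → ℕ}
    (hM : Primrec M) (hA : Primrec A) (hB : Primrec B) (hC : Primrec C) (hN : Primrec N) :
    Primrec fun x => condB (M x) (A x) (B x) (C x) (N x) := by
  have tri : ∀ {X Y : α → ℕ}, Primrec X → Primrec Y →
      Primrec fun x => bAll (M x) (fun i => bAll (M x) (fun j => bAll (M x) (fun k =>
        !(bit (X x) (i * M x + j)) ||
          (!(bit (Y x) (j * M x + k)) || bit (Y x) (i * M x + k))))) := by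
    intro X Y hX hY
    apply pr_bAll hM
    apply pr_bAll (hM.comp fst)
    apply pr_bAll (hM.comp (fst.comp fst))
    have hx : Primrec fun p : ((α × ℕ) × ℕ) × ℕ => p.1.1.1 := fst.comp (fst.comp fst)
    have hi : Primrec fun p : ((α × ℕ) × ℕ) × ℕ => p.1.1.2 := snd.comp (fst.comp fst)
    have hj : Primrec fun p : ((α × ℕ) × ℕ) × ℕ => p.1.2 := snd.comp fst
    have hk : Primrec fun p : ((α × ℕ) × ℕ) × ℕ => p.2 := snd
    have hm' : Primrec fun p : ((α × ℕ) × ℕ) × ℕ => M p.1.1.1 := hM.comp hx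
    exact Primrec.or.comp
      (Primrec.not.comp (pr_bit.comp (hX.comp hx)
        (nat_add.comp (nat_mul.comp hi hm') hj)))
      (Primrec.or.comp
        (Primrec.not.comp (pr_bit.comp (hY.comp hx)
          (nat_add.comp (nat_mul.comp hj hm') hk)))
        (pr_bit.comp (hY.comp hx) (nat_add.comp (nat_mul.comp hi hm') hk)))
  have cl1 : Primrec fun x => bAll (M x) (fun i => bit (A x) (i * M x + i)) :=
    pr_bAll hM (pr_bit.comp (hA.comp fst)
      (nat_add.comp (nat_mul.comp snd (hM.comp fst)) snd))
  have cl2 := tri hA hA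
  have cl3 : Primrec fun x => bAll (M x) (fun i => bAll (M x) (fun j => bAll (M x) (fun k =>
      !(bit (A x) (i * M x + j)) ||
        (!(bit (B x) (j * M x + k)) || bit (B x) (i * M x + k))))) := by
    apply pr_bAll hM
    apply pr_bAll (hM.comp fst)
    apply pr_bAll (hM.comp (fst.comp fst))
    have hx : Primrec fun p : ((α × ℕ) × ℕ) × ℕ => p.1.1.1 := fst.comp (fst.comp fst)
    have hi : Primrec fun p : ((α × ℕ) × ℕ) × ℕ => p.1.1.2 := snd.comp (fst.comp fst)
    have hj : Primrec fun p : ((α × ℕ) × ℕ) × ℕ => p.1.2 := snd.comp fst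
    have hk : Primrec fun p : ((α × ℕ) × ℕ) × ℕ => p.2 := snd
    have hm' : Primrec fun p : ((α × ℕ) × ℕ) × ℕ => M p.1.1.1 := hM.comp hx
    exact Primrec.or.comp
      (Primrec.not.comp (pr_bit.comp (hA.comp hx)
        (nat_add.comp (nat_mul.comp hi hm') hj)))
      (Primrec.or.comp
        (Primrec.not.comp (pr_bit.comp (hB.comp hx)
          (nat_add.comp (nat_mul.comp hj hm') hk)))
        (pr_bit.comp (hB.comp hx) (nat_add.comp (nat_mul.comp hi hm') hk)))
  have cl4 : Primrec fun x => bAll (M x) (fun i => bAll (M x) (fun j => bAll (N x + 1) (fun k =>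
      !(bit (A x) (i * M x + j)) ||
        (!(bit (C x) (k * M x + i)) || bit (C x) (k * M x + j))))) := by
    apply pr_bAll hM
    apply pr_bAll (hM.comp fst)
    apply pr_bAll (succ.comp (hN.comp (fst.comp fst)))
    have hx : Primrec fun p : ((α × ℕ) × ℕ) × ℕ => p.1.1.1 := fst.comp (fst.comp fst)
    have hi : Primrec fun p : ((α × ℕ) × ℕ) × ℕ => p.1.1.2 := snd.comp (fst.comp fst)
    have hj : Primrec fun p : ((α × ℕ) × ℕ) × ℕ => p.1.2 := snd.comp fst
    have hk : Primrec fun p : ((α × ℕ) × ℕ) × ℕ => p.2 := snd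
    have hm' : Primrec fun p : ((α × ℕ) × ℕ) × ℕ => M p.1.1.1 := hM.comp hx
    exact Primrec.or.comp
      (Primrec.not.comp (pr_bit.comp (hA.comp hx)
        (nat_add.comp (nat_mul.comp hi hm') hj)))
      (Primrec.or.comp
        (Primrec.not.comp (pr_bit.comp (hC.comp hx)
          (nat_add.comp (nat_mul.comp hk hm') hi)))
        (pr_bit.comp (hC.comp hx) (nat_add.comp (nat_mul.comp hk hm') hj)))
  have cl5 := tri hB hB
  have cl6 : Primrec fun x => bAll (M x) (fun i => bAll (M x) (fun j =>
      !(bit (B x) (i * M x + j)) ||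
        (bit (A x) (i * M x + j) && !(bit (A x) (j * M x + i))))) := by
    apply pr_bAll hM
    apply pr_bAll (hM.comp fst)
    have hx : Primrec fun p : (α × ℕ) × ℕ => p.1.1 := fst.comp fst
    have hi : Primrec fun p : (α × ℕ) × ℕ => p.1.2 := snd.comp fst
    have hj : Primrec fun p : (α × ℕ) × ℕ => p.2 := snd
    have hm' : Primrec fun p : (α × ℕ) × ℕ => M p.1.1 := hM.comp hx
    exact Primrec.or.comp
      (Primrec.not.comp (pr_bit.comp (hB.comp hx)
        (nat_add.comp (nat_mul.comp hi hm') hj)))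
      (Primrec.and.comp
        (pr_bit.comp (hA.comp hx) (nat_add.comp (nat_mul.comp hi hm') hj))
        (Primrec.not.comp (pr_bit.comp (hA.comp hx)
          (nat_add.comp (nat_mul.comp hj hm') hi))))
  have := Primrec.and.comp cl1 (Primrec.and.comp cl2 (Primrec.and.comp cl3
    (Primrec.and.comp cl4 (Primrec.and.comp cl5 cl6))))
  exact this.of_eq fun x => rfl

lemma pr_FB : Primrec FB := by
  unfold FB
  apply pr_bAll (succ.comp (pr_pow.comp (const 2) (succ.comp Primrec.id)))
  apply pr_bAll (pr_pow.comp (const 2) (nat_mul.comp snd snd))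
  apply pr_bAll (pr_pow.comp (const 2)
    (nat_mul.comp (snd.comp fst) (snd.comp fst)))
  apply pr_bAll (pr_pow.comp (const 2)
    (nat_mul.comp (succ.comp (fst.comp (fst.comp fst))) (snd.comp (fst.comp fst))))
  have hn : Primrec fun p : (((ℕ × ℕ) × ℕ) × ℕ) × ℕ => p.1.1.1.1 :=
    fst.comp (fst.comp (fst.comp fst))
  have hm : Primrec fun p : (((ℕ × ℕ) × ℕ) × ℕ) × ℕ => p.1.1.1.2 :=
    snd.comp (fst.comp (fst.comp fst))
  have ha : Primrec fun p : (((ℕ × ℕ) × ℕ) × ℕ) × ℕ => p.1.1.2 := snd.comp (fst.comp fst)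
  have hb : Primrec fun p : (((ℕ × ℕ) × ℕ) × ℕ) × ℕ => p.1.2 := snd.comp fst
  have hc : Primrec fun p : (((ℕ × ℕ) × ℕ) × ℕ) × ℕ => p.2 := snd
  have hq : Primrec fun p : (((ℕ × ℕ) × ℕ) × ℕ) × ℕ =>
      pk p.1.1.1.2 p.1.1.2 p.1.2 p.2 :=
    Primrec₂.natPair.comp hm (Primrec₂.natPair.comp ha (Primrec₂.natPair.comp hb hc))
  have hcond := pr_condB hm ha hb hc hn
  have hinner : Primrec fun p : (((ℕ × ℕ) × ℕ) × ℕ) × ℕ =>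
      bAll p.1.1.1.2 (fun w => bit (Ev (pk p.1.1.1.2 p.1.1.2 p.1.2 p.2) p.1.1.1.1) w) :=
    pr_bAll hm (pr_bit.comp (pr_Ev.comp (hq.comp fst) (hn.comp fst)) snd)
  exact Primrec.or.comp (Primrec.not.comp hcond) hinner

end LCDec


/-- the theory LC is decidable (computably decidable under a Gödel
numbering of modal formulas). -/
theorem LC_decidable :
    ∃ f : ℕ → Bool, Computable f ∧ ∀ A : Form, (LCProves A ↔ f (encodeForm A) = true) :=
  ⟨LCDec.FB, LCDec.pr_FB.to_comp, LCDec.FB_iff⟩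

end PLHA
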